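/- arXiv:1506.06480 — 7 statements merged into one kernel-verified Lean document; each statement's English description precedes it below -/
import Mathlib

section
/- Let (R, m) be a two-dimensional regular local ring with m = (x, y), and let 1 < m ≤ n be integers. Set I = (x^m) + m^n and Q = (x^m, y^n). Then Q : I = m^{m-1}. -/
open IsLocalRing

open Ideal

section Monomials
variable {R : Type*} [CommRing R]

lemma mono_mem_pow' (x y : R) {k i : ℕ} (hi : i ≤ k) :
    x ^ i * y ^ (k - i) ∈ Ideal.span {x, y} ^ k := by
  have h1 : x ∈ Ideal.span {x, y} := Ideal.subset_span (by simp)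
  have h2 : y ∈ Ideal.span {x, y} := Ideal.subset_span (by simp)
  have := Ideal.mul_mem_mul (Ideal.pow_mem_pow h1 i) (Ideal.pow_mem_pow h2 (k - i))
  rwa [← pow_add, Nat.add_sub_cancel' hi] at this

lemma pow_pair_le' (x y : R) (k : ℕ) :
    Ideal.span {x, y} ^ k ≤ Ideal.span ((fun i => x ^ i * y ^ (k - i)) '' Set.Iic k) := by
  induction k with
  | zero =>
    have h1 : (1 : R) ∈ (fun i => x ^ i * y ^ (0 - i)) '' Set.Iic 0 :=
      ⟨0, Set.mem_Iic.mpr le_rfl, by simp⟩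
    rw [pow_zero, Ideal.one_eq_top]
    exact le_of_eq ((Ideal.eq_top_iff_one _).mpr (Ideal.subset_span h1)).symm
  | succ k ih =>
    rw [pow_succ]
    refine le_trans (Ideal.mul_mono_left ih) ?_
    rw [Ideal.span_mul_span']
    apply Ideal.span_le.mpr
    rintro z ⟨s, ⟨i, hik, rfl⟩, t, ht, rfl⟩
    apply Ideal.subset_span
    have hik' : i ≤ k := Set.mem_Iic.mp hik
    simp only [Set.mem_insert_iff, Set.mem_singleton_iff] at ht
    rcases ht with h | h <;> rw [h]
    · refine ⟨i + 1, Set.mem_Iic.mpr (by omega), ?_⟩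
      show x ^ (i + 1) * y ^ (k + 1 - (i + 1)) = x ^ i * y ^ (k - i) * x
      rw [show k + 1 - (i + 1) = k - i from by omega, pow_succ]; ring
    · refine ⟨i, Set.mem_Iic.mpr (by omega), ?_⟩
      show x ^ i * y ^ (k + 1 - i) = x ^ i * y ^ (k - i) * y
      rw [show k + 1 - i = (k - i) + 1 from by omega, pow_succ]; ring

lemma pow_pair_le_span' (x y : R) {a b k : ℕ} (hab : a + b ≤ k + 1) :
    Ideal.span {x, y} ^ k ≤ Ideal.span {x ^ a, y ^ b} := by
  refine (pow_pair_le' x y k).trans (Ideal.span_le.mpr ?_)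
  rintro z ⟨i, hik, rfl⟩
  simp only [Set.mem_Iic] at hik
  simp only []
  by_cases h : a ≤ i
  · have hx : (x : R) ^ a ∈ Ideal.span {x ^ a, y ^ b} := Ideal.subset_span (by simp)
    have e : x ^ i * y ^ (k - i) = x ^ a * (x ^ (i - a) * y ^ (k - i)) := by
      rw [← mul_assoc, ← pow_add, Nat.add_sub_cancel' h]
    rw [e]
    exact Ideal.mul_mem_right _ _ hx
  · have hy : (y : R) ^ b ∈ Ideal.span {x ^ a, y ^ b} := Ideal.subset_span (by simp)
    have e : x ^ i * y ^ (k - i) = y ^ b * (x ^ i * y ^ (k - i - b)) := by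
      conv_lhs => rw [show k - i = b + (k - i - b) from by omega, pow_add]
      ring
    rw [e]
    exact Ideal.mul_mem_right _ _ hy

end Monomials


lemma exists_middle_prime (R : Type*) [CommRing R] [IsLocalRing R]
    (hdim : ringKrullDim R = 2) :
    ∃ q : Ideal R, q.IsPrime ∧ q ≠ ⊥ ∧ q < maximalIdeal R := by
  have h2 : ∃ p : LTSeries (PrimeSpectrum R), 2 ≤ p.length := by
    by_contra hc
    push_neg at hc
    have hle : ringKrullDim R ≤ 1 := by
      rw [ringKrullDim, Order.krullDim]
      exact iSup_le fun p => by
        exact_mod_cast Nat.cast_le.mpr (Nat.lt_succ_iff.mp (by exact_mod_cast hc p))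
    rw [hdim] at hle
    norm_num at hle
  obtain ⟨p, hp⟩ := h2
  set i0 : Fin (p.length + 1) := ⟨0, by omega⟩
  set i1 : Fin (p.length + 1) := ⟨1, by omega⟩
  set i2 : Fin (p.length + 1) := ⟨2, by omega⟩
  have h01 : p.toFun i0 < p.toFun i1 := p.strictMono (by simp [i0, i1, Fin.lt_def])
  have h12 : p.toFun i1 < p.toFun i2 := p.strictMono (by simp [i1, i2, Fin.lt_def])
  refine ⟨(p.toFun i1).asIdeal, (p.toFun i1).2, ?_, ?_⟩
  · intro hbot
    have : (p.toFun i0).asIdeal < (p.toFun i1).asIdeal := h01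
    rw [hbot] at this
    exact (not_le_of_gt this) bot_le
  · have hlt : (p.toFun i1).asIdeal < (p.toFun i2).asIdeal := h12
    exact lt_of_lt_of_le hlt (le_maximalIdeal (p.toFun i2).2.ne_top)


section Artin
variable {R : Type*} [CommRing R] [IsLocalRing R]
variable {M : Type*} [AddCommGroup M] [Module R M]

lemma isArtinian_of_torsionBy (hN : IsNoetherian R M)
    (h : Module.IsTorsionBySet R M (maximalIdeal R : Set R)) : IsArtinian R M := by
  letI : Module (R ⧸ maximalIdeal R) M := h.module
  haveI : IsScalarTower R (R ⧸ maximalIdeal R) M := h.isScalarTower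
  haveI : IsNoetherian (R ⧸ maximalIdeal R) M := isNoetherian_of_tower R hN
  letI : Field (R ⧸ maximalIdeal R) := Ideal.Quotient.field _
  haveI hart : IsArtinian (R ⧸ maximalIdeal R) M := isArtinian_of_fg_of_artinian'
  -- transfer down to R
  let f : Submodule R M → Submodule (R ⧸ maximalIdeal R) M := fun N =>
    { carrier := N
      add_mem' := fun ha hb => N.add_mem ha hb
      zero_mem' := N.zero_mem
      smul_mem' := by
        rintro c x hx
        obtain ⟨r, rfl⟩ := Ideal.Quotient.mk_surjective c
        rw [h.mk_smul]
        exact N.smul_mem r hx }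
  rw [isArtinian_iff]
  have hwf : WellFounded ((· < ·) : Submodule (R ⧸ maximalIdeal R) M →
      Submodule (R ⧸ maximalIdeal R) M → Prop) := (isArtinian_iff _ _).mp hart
  have hmono : ∀ a b : Submodule R M, a < b → f a < f b := by
    intro a b hab
    rw [lt_iff_le_and_ne] at hab ⊢
    refine ⟨fun z hz => hab.1 hz, ?_⟩
    intro hfeq
    apply hab.2
    ext z
    exact ⟨fun hz => by exact (hfeq ▸ hz : z ∈ f b), fun hz => by exact (hfeq.symm ▸ hz : z ∈ f a)⟩
  exact Subrelation.wf (fun {a b} hab => hmono a b hab) (InvImage.wf f hwf)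

end Artin


universe u v

lemma isArtinian_of_pow_smul {R : Type u} [CommRing R] [IsLocalRing R] :
    ∀ (T : ℕ) (M : Type v) [AddCommGroup M] [Module R M],
    IsNoetherian R M → (maximalIdeal R ^ T • (⊤ : Submodule R M) = ⊥) → IsArtinian R M := by
  intro T
  induction T with
  | zero =>
    intro M _ _ hN h
    rw [pow_zero, Ideal.one_eq_top, Submodule.top_smul] at h
    haveI : Subsingleton M := by
      constructor
      intro a b
      have ha : a ∈ (⊥ : Submodule R M) := h ▸ Submodule.mem_top
      have hb : b ∈ (⊥ : Submodule R M) := h ▸ Submodule.mem_top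
      rw [Submodule.mem_bot] at ha hb
      rw [ha, hb]
    exact isArtinian_of_torsionBy hN (fun x a => by
      rw [Subsingleton.elim x 0, smul_zero])
  | succ T ih =>
    intro M _ _ hN h
    set N : Submodule R M := maximalIdeal R • ⊤ with hNdef
    haveI : IsNoetherian R N := inferInstance
    haveI : IsNoetherian R (M ⧸ N) := inferInstance
    have hq : IsArtinian R (M ⧸ N) := by
      apply isArtinian_of_torsionBy inferInstance
      intro z a
      obtain ⟨w, rfl⟩ := Submodule.Quotient.mk_surjective N z
      show (a : R) • Submodule.Quotient.mk w = 0
      rw [← Submodule.Quotient.mk_smul, Submodule.Quotient.mk_eq_zero]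
      exact Submodule.smul_mem_smul a.2 Submodule.mem_top
    have hNart : IsArtinian R N := by
      apply ih N inferInstance
      rw [eq_bot_iff]
      intro z hz
      have hz' : (z : M) ∈ Submodule.map N.subtype (maximalIdeal R ^ T • (⊤ : Submodule R N)) :=
        Submodule.mem_map_of_mem hz
      rw [Submodule.map_smul''] at hz'
      have : Submodule.map N.subtype ⊤ = N := Submodule.map_subtype_top N
      rw [this] at hz'
      have hle : maximalIdeal R ^ T • N ≤ (⊥ : Submodule R M) := by
        rw [hNdef, ← Submodule.smul_assoc, smul_eq_mul, ← pow_succ, h]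
      have : (z : M) = 0 := by simpa using hle hz'
      exact Subtype.ext this
    exact (isArtinian_iff_submodule_quotient N).mpr ⟨hNart, hq⟩

lemma pit {R : Type u} [CommRing R] [IsDomain R] [IsNoetherianRing R] [IsLocalRing R]
    (q : Ideal R) (hq : q.IsPrime) (hqbot : q ≠ ⊥) (x : R) (hxq : x ∉ q)
    (hxm : x ∈ maximalIdeal R) (T : ℕ)
    (hnil : maximalIdeal R ^ T ≤ Ideal.span {x}) : False := by
  classical
  let Rq := Localization.AtPrime q
  let φ := algebraMap R Rq
  have hinj : Function.Injective φ := IsLocalization.injective Rq q.primeCompl_le_nonZeroDivisors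
  haveI : IsNoetherianRing Rq := IsLocalization.isNoetherianRing q.primeCompl Rq inferInstance
  set J : Ideal Rq := Ideal.map φ q with hJ
  set Qk : ℕ → Ideal R := fun k => Ideal.comap φ (J ^ k) with hQk
  have hanti : ∀ {k l : ℕ}, k ≤ l → Qk l ≤ Qk k :=
    fun {k l} hkl => Ideal.comap_mono (Ideal.pow_le_pow_right hkl)
  have hcancel : ∀ (k : ℕ) (a : R), a * x ∈ Qk k → a ∈ Qk k := by
    intro k a ha
    have hu : IsUnit (φ x) := IsLocalization.map_units Rq (⟨x, hxq⟩ : q.primeCompl)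
    rw [hQk] at ha ⊢
    rw [Ideal.mem_comap] at ha ⊢
    rw [_root_.map_mul] at ha
    obtain ⟨u, hu⟩ := hu
    have : φ a = (φ a * φ x) * ((u⁻¹ : Rqˣ) : Rq) := by
      rw [mul_assoc, ← hu, Units.mul_inv, mul_one]
    rw [this]
    exact Ideal.mul_mem_right _ _ ha
  -- Artinian quotient
  have hart : IsArtinian R (R ⧸ (Ideal.span {x} : Ideal R)) := by
    apply isArtinian_of_pow_smul T
    · infer_instance
    · rw [eq_bot_iff]
      refine Submodule.smul_le.mpr ?_
      intro a ha z _
      obtain ⟨w, rfl⟩ := Submodule.Quotient.mk_surjective _ z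
      rw [← Submodule.Quotient.mk_smul, Submodule.mem_bot, Submodule.Quotient.mk_eq_zero]
      exact Ideal.mul_mem_right w _ (hnil ha)
  -- stabilization
  set D : ℕ → Ideal R := fun k => Qk k ⊔ Ideal.span {x} with hD
  have hDanti : ∀ {k l : ℕ}, k ≤ l → D l ≤ D k := fun hkl => sup_le_sup_right (hanti hkl) _
  let f : ℕ →o (Submodule R (R ⧸ (Ideal.span {x} : Ideal R)))ᵒᵈ :=
    ⟨fun k => Submodule.map (Ideal.span {x} : Ideal R).mkQ (D k), fun k l hkl =>
      Submodule.map_mono (hDanti hkl)⟩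
  obtain ⟨n, hn⟩ := IsArtinian.monotone_stabilizes f
  have hDn : D n = D (n + 1) := by
    have hmm : Submodule.map (Ideal.span {x} : Ideal R).mkQ (D n)
        = Submodule.map (Ideal.span {x} : Ideal R).mkQ (D (n + 1)) := hn (n + 1) (Nat.le_succ n)
    have hcm : ∀ k, Submodule.comap (Ideal.span {x} : Ideal R).mkQ
        (Submodule.map (Ideal.span {x} : Ideal R).mkQ (D k)) = D k := by
      intro k
      rw [Submodule.comap_map_eq, Submodule.ker_mkQ]
      exact sup_eq_left.mpr le_sup_right
    have := congrArg (Submodule.comap (Ideal.span {x} : Ideal R).mkQ) hmm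
    rwa [hcm, hcm] at this
  -- Nakayama
  have hQn : Qk n = Qk (n + 1) := by
    refine le_antisymm ?_ (hanti (Nat.le_succ n))
    have hNN : Qk n ≤ Qk (n + 1) ⊔ maximalIdeal R • Qk n := by
      intro g hg
      have hgD : g ∈ (Qk (n+1) : Ideal R) ⊔ Ideal.span {x} := by
        have : g ∈ D (n + 1) := hDn ▸ (le_sup_left (a := Qk n) (b := Ideal.span {x}) hg)
        exact this
      obtain ⟨g1, hg1, z, hz, rfl⟩ := Submodule.mem_sup.mp hgD
      obtain ⟨a, rfl⟩ := Ideal.mem_span_singleton'.mp hz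
      have hax : a * x ∈ Qk n := by
        have : g1 ∈ Qk n := hanti (Nat.le_succ n) hg1
        have := Submodule.sub_mem _ hg ‹g1 ∈ Qk n›
        simpa using this
      have ha : a ∈ Qk n := hcancel n a hax
      refine Submodule.add_mem_sup hg1 ?_
      rw [show a * x = x • a from by rw [smul_eq_mul]; ring]
      exact Submodule.smul_mem_smul hxm ha
    exact Submodule.le_of_le_smul_of_le_jacobson_bot (IsNoetherian.noetherian _)
      (by rw [jacobson_eq_maximalIdeal ⊥ bot_ne_top]) hNN
  -- push back to the localization
  have hJn : J ^ n = J ^ (n + 1) := by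
    have h1 : Ideal.map φ (Qk n) = J ^ n := IsLocalization.map_comap q.primeCompl Rq (J ^ n)
    have h2 : Ideal.map φ (Qk (n+1)) = J ^ (n+1) := IsLocalization.map_comap q.primeCompl Rq _
    rw [← h1, ← h2, hQn]
  have hstab : ∀ k, J ^ (n + k) = J ^ n := by
    intro k
    induction k with
    | zero => rfl
    | succ k ih =>
      rw [show n + (k+1) = (n + k) + 1 from rfl, pow_succ, ih, ← pow_succ, ← hJn]
  haveI : IsLocalRing Rq := inferInstance
  have hmax : J = maximalIdeal Rq := Localization.AtPrime.map_eq_maximalIdeal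
  have hbot : J ^ (n + 1) ≤ ⊥ := by
    have hinf : (⨅ i : ℕ, maximalIdeal Rq ^ i) = ⊥ :=
      Ideal.iInf_pow_eq_bot_of_isLocalRing _ (maximalIdeal.isMaximal Rq).ne_top
    rw [← hinf]
    refine le_iInf fun k => ?_
    rcases le_or_gt k (n + 1) with h | h
    · rw [hmax] at *
      exact Ideal.pow_le_pow_right h
    · have : J ^ k = J ^ n := by
        have := hstab (k - n)
        rwa [show n + (k - n) = k from by omega] at this
      rw [hmax] at this ⊢
      rw [this, ← hmax, hJn, hmax]
  -- contradiction
  obtain ⟨g, hgq, hg0⟩ := Submodule.exists_mem_ne_zero_of_ne_bot hqbot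
  have hgJ : φ g ∈ J := Ideal.mem_map_of_mem φ hgq
  have : (φ g) ^ (n + 1) ∈ J ^ (n + 1) := Ideal.pow_mem_pow hgJ n.succ
  have hz : (φ g) ^ (n + 1) = 0 := by
    have := hbot this
    simpa using this
  haveI : IsDomain Rq := IsLocalization.isDomain_localization q.primeCompl_le_nonZeroDivisors
  have : φ g = 0 := pow_eq_zero_iff (Nat.succ_ne_zero n) |>.mp hz
  exact hg0 (hinj (by simpa using this))

lemma not_pow_mem {R : Type u} [CommRing R] [IsDomain R] [IsNoetherianRing R] [IsLocalRing R]
    (hdim : ringKrullDim R = 2) (x y : R)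
    (hm : maximalIdeal R = Ideal.span {x, y}) (N : ℕ) :
    y ^ N ∉ Ideal.span {x} := by
  intro hyN
  obtain ⟨q, hq, hq0, hqm⟩ := exists_middle_prime R hdim
  have hxm : x ∈ maximalIdeal R := by
    rw [hm]; exact Ideal.subset_span (by simp)
  have hnil : maximalIdeal R ^ N ≤ Ideal.span {x} := by
    rw [hm]
    refine (pow_pair_le_span' x y (a := 1) (b := N) (by omega)).trans ?_
    apply Ideal.span_le.mpr
    intro z hz
    simp only [Set.mem_insert_iff, Set.mem_singleton_iff] at hz
    rcases hz with h | h
    · rw [h, pow_one]; exact Ideal.subset_span rfl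
    · rw [h]; exact hyN
  have hxq : x ∉ q := by
    intro hxq
    have hle : maximalIdeal R ^ N ≤ q := hnil.trans ((Ideal.span_singleton_le_iff_mem q).mpr hxq)
    have : maximalIdeal R ≤ q := Ideal.IsPrime.le_of_pow_le hle
    exact absurd (lt_of_lt_of_le hqm this) (lt_irrefl q)
  exact pit q hq hq0 x hxq hxm N hnil

-- DVR-style representation
lemma unit_pow_rep {S : Type u} [CommRing S] [IsNoetherianRing S] [IsLocalRing S]
    (t : S) (hmax : maximalIdeal S = Ideal.span {t}) {a : S} (ha : a ≠ 0) :
    ∃ (c : S) (k : ℕ), IsUnit c ∧ a = c * t ^ k := by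
  classical
  have hbot : (⨅ i : ℕ, maximalIdeal S ^ i) = ⊥ :=
    Ideal.iInf_pow_eq_bot_of_isLocalRing _ (maximalIdeal.isMaximal S).ne_top
  have hex : ∃ i, a ∉ maximalIdeal S ^ i := by
    by_contra hcon
    push_neg at hcon
    have : a ∈ (⨅ i : ℕ, maximalIdeal S ^ i) := Submodule.mem_iInf _ |>.mpr hcon
    rw [hbot] at this
    exact ha (Submodule.mem_bot S |>.mp this)
  set k0 := Nat.find hex with hk0
  have hspec : a ∉ maximalIdeal S ^ k0 := Nat.find_spec hex
  have hk0pos : k0 ≠ 0 := by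
    intro h0
    rw [h0, pow_zero, Ideal.one_eq_top] at hspec
    exact hspec Submodule.mem_top
  set k := k0 - 1 with hk
  have hmem : a ∈ maximalIdeal S ^ k := by
    by_contra hcon
    exact Nat.find_min hex (by omega) hcon
  rw [hmax, Ideal.span_singleton_pow, Ideal.mem_span_singleton'] at hmem
  obtain ⟨c, hc⟩ := hmem
  refine ⟨c, k, ?_, hc.symm⟩
  by_contra hcu
  have hcm : c ∈ maximalIdeal S := (IsLocalRing.mem_maximalIdeal c).mpr hcu
  rw [hmax, Ideal.mem_span_singleton'] at hcm
  obtain ⟨d, hd⟩ := hcm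
  apply hspec
  have : a = d * t ^ (k + 1) := by rw [← hc, ← hd, pow_succ]; ring
  rw [show k0 = k + 1 from by omega, hmax, Ideal.span_singleton_pow,
    Ideal.mem_span_singleton']
  exact ⟨d, this.symm⟩

lemma quotient_cancel {R : Type u} [CommRing R] [IsNoetherianRing R] [IsLocalRing R]
    (x y : R) (hm : maximalIdeal R = Ideal.span {x, y})
    (hy : ∀ N : ℕ, y ^ N ∉ Ideal.span {x}) :
    ∀ a : R, a * y ∈ Ideal.span {x} → a ∈ Ideal.span {x} := by
  intro a hay
  have hItop : (Ideal.span {x} : Ideal R) ≠ ⊤ := by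
    intro h
    apply hy 0
    rw [pow_zero, h]
    exact Submodule.mem_top
  haveI : Nontrivial (R ⧸ (Ideal.span {x})) := Ideal.Quotient.nontrivial_iff.mpr hItop
  haveI : IsLocalRing (R ⧸ (Ideal.span {x})) :=
    IsLocalRing.of_surjective' (Ideal.Quotient.mk (Ideal.span {x})) Ideal.Quotient.mk_surjective
  have hmaxS : maximalIdeal (R ⧸ (Ideal.span {x})) = Ideal.span {Ideal.Quotient.mk (Ideal.span {x}) y} := by
    apply le_antisymm
    · intro s hs
      obtain ⟨r, rfl⟩ := Ideal.Quotient.mk_surjective s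
      have hr : r ∈ maximalIdeal R := by
        rw [IsLocalRing.mem_maximalIdeal] at hs ⊢
        intro hru
        exact hs (hru.map (Ideal.Quotient.mk (Ideal.span {x})))
      rw [hm, Ideal.mem_span_pair] at hr
      obtain ⟨u, v, huv⟩ := hr
      rw [Ideal.mem_span_singleton']
      refine ⟨Ideal.Quotient.mk (Ideal.span {x}) v, ?_⟩
      have hux : Ideal.Quotient.mk (Ideal.span {x}) (u * x) = 0 := by
        rw [Ideal.Quotient.eq_zero_iff_mem]
        exact Ideal.mul_mem_left _ _ (Ideal.subset_span rfl)
      calc Ideal.Quotient.mk (Ideal.span {x}) v * Ideal.Quotient.mk (Ideal.span {x}) y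
          = Ideal.Quotient.mk (Ideal.span {x}) (u * x) + Ideal.Quotient.mk (Ideal.span {x}) (v * y) := by
            rw [hux, ← _root_.map_mul, zero_add]
        _ = Ideal.Quotient.mk (Ideal.span {x}) r := by rw [← map_add]; exact congrArg _ huv
    · rw [Ideal.span_singleton_le_iff_mem, IsLocalRing.mem_maximalIdeal]
      intro hu
      obtain ⟨s, hs⟩ := isUnit_iff_exists_inv.mp hu
      obtain ⟨r, rfl⟩ := Ideal.Quotient.mk_surjective s
      have : Ideal.Quotient.mk (Ideal.span {x}) (y * r - 1) = 0 := by
        rw [map_sub, _root_.map_mul, map_one, hs, sub_self]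
      rw [Ideal.Quotient.eq_zero_iff_mem] at this
      obtain ⟨c, hc⟩ := Ideal.mem_span_singleton'.mp this
      have h1 : (1 : R) ∈ maximalIdeal R := by
        rw [hm, Ideal.mem_span_pair]
        exact ⟨-c, r, by linear_combination -hc⟩
      exact (maximalIdeal.isMaximal R).ne_top (Ideal.eq_top_of_isUnit_mem _ h1 isUnit_one)
  have hy0 : Ideal.Quotient.mk (Ideal.span {x}) a * Ideal.Quotient.mk (Ideal.span {x}) y = 0 := by
    rw [← _root_.map_mul, Ideal.Quotient.eq_zero_iff_mem]
    exact hay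
  by_contra hax
  have hane : Ideal.Quotient.mk (Ideal.span {x}) a ≠ 0 := by
    rw [Ne, Ideal.Quotient.eq_zero_iff_mem]
    exact hax
  obtain ⟨c, k, hcu, hck⟩ := unit_pow_rep (Ideal.Quotient.mk (Ideal.span {x}) y) hmaxS hane
  have : c * (Ideal.Quotient.mk (Ideal.span {x}) y) ^ (k + 1) = 0 := by
    rw [pow_succ, ← mul_assoc, ← hck, hy0]
  have hyk : (Ideal.Quotient.mk (Ideal.span {x}) y) ^ (k + 1) = 0 := by
    rwa [hcu.mul_right_eq_zero] at this
  apply hy (k + 1)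
  rw [← Ideal.Quotient.eq_zero_iff_mem, map_pow]
  exact hyk

lemma cancel_pow {R : Type u} [CommRing R] [IsDomain R] [IsNoetherianRing R] [IsLocalRing R]
    (x y : R) (hm : maximalIdeal R = Ideal.span {x, y})
    (hy : ∀ N : ℕ, y ^ N ∉ Ideal.span {x}) (hx0 : x ≠ 0) :
    ∀ (M e : ℕ) (a : R), a * y ^ e ∈ Ideal.span {x ^ M} → a ∈ Ideal.span {x ^ M} := by
  have base : ∀ (M : ℕ) (a : R), a * y ∈ Ideal.span {x ^ M} → a ∈ Ideal.span {x ^ M} := by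
    intro M
    induction M with
    | zero =>
      intro a _
      rw [pow_zero, Ideal.span_singleton_one]
      exact Submodule.mem_top
    | succ M ih =>
      intro a h
      obtain ⟨b, hb⟩ := Ideal.mem_span_singleton'.mp h
      have h1 : a * y ∈ Ideal.span {x} := by
        rw [Ideal.mem_span_singleton']
        exact ⟨b * x ^ M, by rw [hb.symm, pow_succ]; ring⟩
      obtain ⟨a1, ha1⟩ := Ideal.mem_span_singleton'.mp (quotient_cancel x y hm hy a h1)
      have hcan : a1 * y = b * x ^ M := by
        apply mul_right_cancel₀ hx0
        calc a1 * y * x = a * y := by rw [← ha1]; ring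
          _ = b * x ^ (M + 1) := hb.symm
          _ = b * x ^ M * x := by rw [pow_succ]; ring
      have := ih a1 (Ideal.mem_span_singleton'.mpr ⟨b, hcan.symm⟩)
      obtain ⟨c, hc⟩ := Ideal.mem_span_singleton'.mp this
      refine Ideal.mem_span_singleton'.mpr ⟨c, ?_⟩
      rw [← ha1, ← hc, pow_succ]; ring
  intro M e
  induction e with
  | zero => intro a h; simpa using h
  | succ e ih =>
    intro a h
    apply ih
    apply base
    have : a * y ^ e * y = a * y ^ (e + 1) := by rw [pow_succ]; ring
    rw [this]
    exact h

theorem stmt_0 (R : Type*) [CommRing R] [IsDomain R] [IsNoetherianRing R] [IsLocalRing R]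
    (hdim : ringKrullDim R = 2) (x y : R)
    (hm : maximalIdeal R = Ideal.span {x, y})
    (m n : ℕ) (hm1 : 1 < m) (hmn : m ≤ n) :
    Submodule.colon (Ideal.span {x ^ m, y ^ n} : Ideal R)
        ((Ideal.span {x ^ m} ⊔ maximalIdeal R ^ n : Ideal R) : Set R) = maximalIdeal R ^ (m - 1) := by
  have hy : ∀ N : ℕ, y ^ N ∉ Ideal.span {x} := not_pow_mem hdim x y hm
  have hm' : maximalIdeal R = Ideal.span {y, x} := by rw [hm, Set.pair_comm]
  have hx : ∀ N : ℕ, x ^ N ∉ Ideal.span {y} := not_pow_mem hdim y x hm'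
  have hx0 : x ≠ 0 := by
    intro h
    exact hx 1 (by rw [h, pow_one]; exact Submodule.zero_mem _)
  have hy0 : y ≠ 0 := by
    intro h
    exact hy 1 (by rw [h, pow_one]; exact Submodule.zero_mem _)
  have C1 := cancel_pow x y hm hy hx0
  have C2 := cancel_pow y x hm' hx hy0
  set Q : Ideal R := Ideal.span {x ^ m, y ^ n} with hQ
  have hxmem : x ∈ maximalIdeal R := by rw [hm]; exact Ideal.subset_span (by simp)
  have hymem : y ∈ maximalIdeal R := by rw [hm]; exact Ideal.subset_span (by simp)
  have hQtop : maximalIdeal R ^ (m + n - 1) ≤ Q := by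
    rw [hm, hQ]
    exact pow_pair_le_span' x y (by omega)
  -- the key downward induction
  have key : ∀ j, j ≤ m - 1 → ∀ s : R,
      (∀ z ∈ maximalIdeal R ^ n, s * (x ^ (m - 1 - j) * z) ∈ Q) →
      s ∈ maximalIdeal R ^ j := by
    intro j
    induction j with
    | zero => intro _ s _; rw [pow_zero, Ideal.one_eq_top]; exact Submodule.mem_top
    | succ j ihj =>
      intro hj1 s hs
      have hj2 : j + 1 ≤ m - 1 := hj1
      -- the special element of m^n
      have hz0 : x ^ (j + 1) * y ^ (n - (j + 1)) ∈ maximalIdeal R ^ n := by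
        rw [hm]
        exact mono_mem_pow' x y (by omega)
      have h0 := hs _ hz0
      have hre : x ^ (m - 1 - (j + 1)) * (x ^ (j + 1) * y ^ (n - (j + 1)))
          = x ^ (m - 1) * y ^ (n - (j + 1)) := by
        rw [← mul_assoc, ← pow_add]
        congr 2
        omega
      rw [hre] at h0
      have h0' : s * (x ^ (m - 1) * y ^ (n - (j + 1))) ∈ Q := h0
      obtain ⟨a, b, hab⟩ := Ideal.mem_span_pair.mp (hQ ▸ h0')
      have hid1 : (s * x ^ (m - 1) - b * y ^ (j + 1)) * y ^ (n - (j + 1)) = a * x ^ m := by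
        have e1 : y ^ (j + 1) * y ^ (n - (j + 1)) = y ^ n := by
          rw [← pow_add]; congr 1; omega
        calc (s * x ^ (m - 1) - b * y ^ (j + 1)) * y ^ (n - (j + 1))
            = s * (x ^ (m - 1) * y ^ (n - (j + 1))) - b * (y ^ (j + 1) * y ^ (n - (j + 1))) := by
              ring
          _ = (a * x ^ m + b * y ^ n) - b * y ^ n := by rw [e1, hab]
          _ = a * x ^ m := by ring
      have hmem1 : (s * x ^ (m - 1) - b * y ^ (j + 1)) * y ^ (n - (j + 1))
          ∈ Ideal.span {x ^ m} := Ideal.mem_span_singleton'.mpr ⟨a, hid1.symm⟩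
      obtain ⟨c, hc⟩ := Ideal.mem_span_singleton'.mp (C1 m (n - (j + 1)) _ hmem1)
      have e2 : x ^ (m - 1) * x = x ^ m := by rw [← pow_succ]; congr 1; omega
      have hid2 : (s - c * x) * x ^ (m - 1) = b * y ^ (j + 1) := by
        calc (s - c * x) * x ^ (m - 1)
            = s * x ^ (m - 1) - c * (x ^ (m - 1) * x) := by ring
          _ = s * x ^ (m - 1) - c * x ^ m := by rw [e2]
          _ = b * y ^ (j + 1) := by rw [hc]; ring
      have hmem2 : (s - c * x) * x ^ (m - 1) ∈ Ideal.span {y ^ (j + 1)} :=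
        Ideal.mem_span_singleton'.mpr ⟨b, hid2.symm⟩
      obtain ⟨d, hd⟩ := Ideal.mem_span_singleton'.mp (C2 (j + 1) (m - 1) _ hmem2)
      -- c ∈ m^j by the inductive hypothesis
      have hcj : c ∈ maximalIdeal R ^ j := by
        apply ihj (by omega) c
        intro z hz
        have e5 : x ^ (m - 1 - j) = x * x ^ (m - 1 - (j + 1)) := by
          rw [← pow_succ']; congr 1; omega
        have hcx : c * x = s - d * y ^ (j + 1) := by linear_combination hd
        have e4 : c * (x ^ (m - 1 - j) * z)
            = s * (x ^ (m - 1 - (j + 1)) * z) - d * (y ^ (j + 1) * (x ^ (m - 1 - (j + 1)) * z)) := by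
          rw [e5]
          calc c * (x * x ^ (m - 1 - (j + 1)) * z)
              = (c * x) * (x ^ (m - 1 - (j + 1)) * z) := by ring
            _ = (s - d * y ^ (j + 1)) * (x ^ (m - 1 - (j + 1)) * z) := by rw [hcx]
            _ = s * (x ^ (m - 1 - (j + 1)) * z) - d * (y ^ (j + 1) * (x ^ (m - 1 - (j + 1)) * z)) := by
              ring
        rw [e4]
        apply Submodule.sub_mem
        · exact hs z hz
        · apply Ideal.mul_mem_left
          apply hQtop
          have h1 : y ^ (j + 1) ∈ maximalIdeal R ^ (j + 1) := Ideal.pow_mem_pow hymem _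
          have h2 : x ^ (m - 1 - (j + 1)) ∈ maximalIdeal R ^ (m - 1 - (j + 1)) :=
            Ideal.pow_mem_pow hxmem _
          have := Ideal.mul_mem_mul h1 (Ideal.mul_mem_mul h2 hz)
          rw [← pow_add, ← pow_add] at this
          rwa [show (j + 1) + ((m - 1 - (j + 1)) + n) = m + n - 1 from by omega] at this
      -- conclude s ∈ m^(j+1)
      have hsplit : s = c * x + d * y ^ (j + 1) := by linear_combination -hd
      rw [hsplit]
      apply Submodule.add_mem
      · rw [pow_succ]
        exact Ideal.mul_mem_mul hcj hxmem
      · exact Ideal.mul_mem_left _ _ (Ideal.pow_mem_pow hymem _)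
  apply le_antisymm
  · intro r hr
    have hr' : ∀ z ∈ maximalIdeal R ^ n, r * z ∈ Q := by
      intro z hz
      have hzI : z ∈ Ideal.span {x ^ m} ⊔ maximalIdeal R ^ n := Submodule.mem_sup_right hz
      have := Submodule.mem_colon.mp hr z hzI
      rwa [smul_eq_mul] at this
    refine key (m - 1) le_rfl r ?_
    intro z hz
    rw [show m - 1 - (m - 1) = 0 from by omega, pow_zero, one_mul]
    exact hr' z hz
  · intro r hr
    rw [Submodule.mem_colon]
    intro p hp
    obtain ⟨p1, hp1, p2, hp2, rfl⟩ := Submodule.mem_sup.mp hp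
    have t1 : r * p1 ∈ Q := by
      apply Ideal.mul_mem_left
      have : Ideal.span {x ^ m} ≤ Q := by
        rw [hQ]
        exact Ideal.span_mono (by simp)
      exact this hp1
    have t2 : r * p2 ∈ Q := by
      apply hQtop
      have := Ideal.mul_mem_mul hr hp2
      rw [← pow_add] at this
      rwa [show m - 1 + n = m + n - 1 from by omega] at this
    rw [smul_eq_mul, mul_add]
    exact Submodule.add_mem _ t1 t2
end

section
/- Let (R, m) be a two-dimensional regular local ring with m = (x, y). Suppose a = f_{11} x + f_{12} y and b = f_{21} x + f_{22} y with all f_{ij} ∈ m^2, and let c = f_{11} f_{22} - f_{12} f_{21}. Set Q = (a, b). Then Q : c = m. -/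
set_option linter.unusedSectionVars false
set_option linter.unusedVariables false
set_option maxHeartbeats 1000000

open IsLocalRing Ideal

section Aux
variable {R : Type*} [CommRing R] [IsDomain R] [IsNoetherianRing R] [IsLocalRing R]

lemma aux_chain (hdim : ringKrullDim R = 2) :
    ∃ p : Ideal R, p.IsPrime ∧ p ≠ ⊥ ∧ p < maximalIdeal R := by
  have hex : ∃ s : LTSeries (PrimeSpectrum R), 2 ≤ s.length := by
    by_contra h
    push_neg at h
    have hle : ringKrullDim R ≤ 1 := by
      rw [ringKrullDim, Order.krullDim]
      apply iSup_le
      intro s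
      have hs2 := h s
      have : s.length ≤ 1 := by omega
      exact_mod_cast this
    rw [hdim] at hle
    norm_num at hle
  obtain ⟨s, hs⟩ := hex
  have h01 : s ⟨0, by omega⟩ < s ⟨1, by omega⟩ := s.strictMono (by simp [Fin.lt_def])
  have h12 : s ⟨1, by omega⟩ < s ⟨2, by omega⟩ := s.strictMono (by simp [Fin.lt_def])
  refine ⟨(s ⟨1, by omega⟩).asIdeal, (s ⟨1, by omega⟩).2, ?_, ?_⟩
  · intro hbot
    rw [← PrimeSpectrum.asIdeal_lt_asIdeal] at h01
    rw [hbot] at h01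
    exact not_lt_bot h01
  · rw [← PrimeSpectrum.asIdeal_lt_asIdeal] at h12
    exact lt_of_lt_of_le h12 (le_maximalIdeal (s ⟨2, by omega⟩).2.ne_top)

lemma aux_kiq {x : R} (hx : x ∈ maximalIdeal R) (z : R)
    (hz : ∀ i : ℕ, z ∈ Ideal.span {x} ⊔ maximalIdeal R ^ i) : z ∈ Ideal.span {x} := by
  set I := Ideal.span {x} with hI
  have hInetop : I ≠ ⊤ := by
    intro h
    have : (1 : R) ∈ I := h ▸ Submodule.mem_top
    rw [hI, Ideal.mem_span_singleton] at this
    exact (IsLocalRing.maximalIdeal.isMaximal R).ne_top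
      (Ideal.eq_top_of_isUnit_mem _ hx (isUnit_of_dvd_one this))
  haveI : Nontrivial (R ⧸ I) := Ideal.Quotient.nontrivial_iff.mpr hInetop
  haveI : IsLocalRing (R ⧸ I) :=
    IsLocalRing.of_surjective' (Ideal.Quotient.mk I) Ideal.Quotient.mk_surjective
  set J : Ideal (R ⧸ I) := (maximalIdeal R).map (Ideal.Quotient.mk I) with hJ
  have hJle : J ≤ maximalIdeal (R ⧸ I) := by
    rw [hJ, Ideal.map_le_iff_le_comap]
    intro t ht
    simp only [Ideal.mem_comap, IsLocalRing.mem_maximalIdeal, mem_nonunits_iff]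
    intro hu
    obtain ⟨v, hv⟩ := IsUnit.exists_left_inv hu
    obtain ⟨v, rfl⟩ := Ideal.Quotient.mk_surjective v
    have : v * t - 1 ∈ I := by
      rw [← Ideal.Quotient.eq_zero_iff_mem]
      rw [map_sub, _root_.map_mul, map_one, hv, sub_self]
    have h1 : (1 : R) ∈ maximalIdeal R := by
      have hvt : v * t ∈ maximalIdeal R := Ideal.mul_mem_left _ _ ht
      have := (maximalIdeal R).sub_mem hvt (Ideal.span_le.mpr
        (Set.singleton_subset_iff.mpr hx) this)
      simpa using this
    exact (IsLocalRing.maximalIdeal.isMaximal R).ne_top ((Ideal.eq_top_iff_one _).mpr h1)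
  have hJne : J ≠ ⊤ := fun h => (IsLocalRing.maximalIdeal.isMaximal (R ⧸ I)).ne_top
    (top_le_iff.mp (h ▸ hJle))
  have hKrull := Ideal.iInf_pow_eq_bot_of_isLocalRing J hJne
  have hmem : ∀ i : ℕ, (Ideal.Quotient.mk I z) ∈ J ^ i := by
    intro i
    obtain ⟨u, hu, v, hv, huv⟩ := Submodule.mem_sup.mp (hz i)
    have : Ideal.Quotient.mk I z = Ideal.Quotient.mk I v := by
      rw [← huv]
      rw [map_add, Ideal.Quotient.eq_zero_iff_mem.mpr hu, zero_add]
    rw [this, ← Ideal.map_pow]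
    exact Ideal.mem_map_of_mem _ hv
  have : Ideal.Quotient.mk I z ∈ (⊥ : Ideal (R ⧸ I)) := by
    rw [← hKrull]
    exact Submodule.mem_iInf _ |>.mpr hmem
  rwa [Submodule.mem_bot, Ideal.Quotient.eq_zero_iff_mem] at this

lemma aux_form {x y : R} (hm : maximalIdeal R = Ideal.span {x, y}) (z : R)
    (hz : ∃ i : ℕ, z ∉ Ideal.span {x} ⊔ Ideal.span {y ^ i}) :
    ∃ (j : ℕ) (w γ : R), IsUnit w ∧ z = w * y ^ j + γ * x := by
  classical
  have hk : ∃ k, k = Nat.find hz := ⟨_, rfl⟩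
  obtain ⟨k, hk⟩ := hk
  have hkspec : z ∉ Ideal.span {x} ⊔ Ideal.span {y ^ k} := hk ▸ Nat.find_spec hz
  have hk0 : k ≠ 0 := by
    intro h0
    apply hkspec
    rw [h0, pow_zero]
    have : (1 : R) ∈ Ideal.span ({1} : Set R) := Ideal.mem_span_singleton_self 1
    have htop : Ideal.span ({1} : Set R) = ⊤ := by
      rw [Ideal.span_singleton_eq_top]; exact isUnit_one
    rw [htop]
    exact le_sup_right (α := Ideal R) Submodule.mem_top
  obtain ⟨j, rfl⟩ : ∃ j, k = j + 1 := ⟨k - 1, by omega⟩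
  have hmem : z ∈ Ideal.span {x} ⊔ Ideal.span {y ^ j} := by
    by_contra hcon
    have := Nat.find_min' hz hcon
    omega
  obtain ⟨u, hu, v, hv, huv⟩ := Submodule.mem_sup.mp hmem
  obtain ⟨γ, hγ⟩ := Ideal.mem_span_singleton'.mp hu
  obtain ⟨w, hw⟩ := Ideal.mem_span_singleton'.mp hv
  refine ⟨j, w, γ, ?_, by rw [← huv, ← hγ, ← hw]; ring⟩
  by_contra hwu
  apply hkspec
  have hwm : w ∈ maximalIdeal R := by
    rwa [IsLocalRing.mem_maximalIdeal, mem_nonunits_iff]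
  rw [hm] at hwm
  obtain ⟨α, β, hαβ⟩ := Ideal.mem_span_pair.mp hwm
  have hz' : z = (γ + α * y ^ j) * x + β * (y ^ (j + 1)) := by
    rw [← huv, ← hγ, ← hw, ← hαβ]; ring
  rw [hz']
  exact Submodule.add_mem_sup (Ideal.mem_span_singleton'.mpr ⟨γ + α * y ^ j, rfl⟩)
    (Ideal.mem_span_singleton'.mpr ⟨β, rfl⟩)

lemma aux_notnil {x y : R} (hm : maximalIdeal R = Ideal.span {x, y})
    (hdim : ringKrullDim R = 2) : ∀ k : ℕ, y ^ k ∉ Ideal.span {x} := by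
  intro k hk
  classical
  have hxm : x ∈ maximalIdeal R := hm ▸ Ideal.subset_span (by simp)
  have hym : y ∈ maximalIdeal R := hm ▸ Ideal.subset_span (by simp)
  have hmne : maximalIdeal R ≠ ⊤ := (IsLocalRing.maximalIdeal.isMaximal R).ne_top
  rcases Nat.eq_zero_or_pos k with hk0 | hkpos
  · subst hk0
    rw [pow_zero, Ideal.mem_span_singleton] at hk
    exact hmne (Ideal.eq_top_of_isUnit_mem _ hxm (isUnit_of_dvd_one hk))
  obtain ⟨p, hp, hp0, hpm⟩ := aux_chain hdim
  haveI := hp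
  have hxp : x ∉ p := by
    intro hxp
    have hyp : y ∈ p := hp.mem_of_pow_mem k
      ((Ideal.span_le.mpr (Set.singleton_subset_iff.mpr hxp)) hk)
    have hle : maximalIdeal R ≤ p := by
      rw [hm, Ideal.span_le]
      rintro t (rfl | rfl)
      exacts [hxp, hyp]
    exact absurd (lt_of_lt_of_le hpm hle) (lt_irrefl _)
  set Rp := Localization.AtPrime p with hRp
  haveI : IsNoetherianRing Rp := IsLocalization.isNoetherianRing p.primeCompl Rp inferInstance
  set φ := algebraMap R Rp with hφ
  set P : Ideal Rp := p.map φ with hP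
  have hPmax : P = maximalIdeal Rp := Localization.AtPrime.map_eq_maximalIdeal
  set Pn : ℕ → Ideal R := fun n => (P ^ n).comap φ with hPn
  have hPnanti : ∀ n, Pn (n + 1) ≤ Pn n := fun n =>
    Ideal.comap_mono (Ideal.pow_le_pow_right (by omega))
  have hPnanti' : Antitone Pn := antitone_nat_of_succ_le hPnanti
  have hxunit : IsUnit (φ x) := IsLocalization.map_units Rp (⟨x, hxp⟩ : p.primeCompl)
  have hcancel : ∀ (n : ℕ) (γ : R), γ * x ∈ Pn n → γ ∈ Pn n := by
    intro n γ h
    obtain ⟨v, hv⟩ := hxunit.exists_right_inv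
    have hγ : φ γ = φ (γ * x) * v := by
      rw [_root_.map_mul, mul_assoc, hv, mul_one]
    rw [hPn, Ideal.mem_comap] at h ⊢
    rw [hγ]
    exact Ideal.mul_mem_right _ _ h
  set Jn : ℕ → Ideal R := fun n => Ideal.span {x} ⊔ Pn n with hJn
  have hxJ : ∀ n, x ∈ Jn n := fun n =>
    Submodule.mem_sup_left (Ideal.mem_span_singleton_self x)
  have hJex : ∀ n, ∃ i, y ^ i ∈ Jn n := fun n =>
    ⟨k, Submodule.mem_sup_left hk⟩
  set d : ℕ → ℕ := fun n => Nat.find (hJex n) with hd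
  have hdspec : ∀ n, y ^ (d n) ∈ Jn n := fun n => Nat.find_spec (hJex n)
  have hdk : ∀ n, d n ≤ k := fun n => Nat.find_min' _ (Submodule.mem_sup_left hk)
  have hJanti : ∀ n n', n ≤ n' → Jn n' ≤ Jn n := fun n n' h =>
    sup_le_sup_left (hPnanti' h) _
  have hstruct : ∀ n, Jn n ≤ Ideal.span {x} ⊔ Ideal.span {y ^ (d n)} := by
    intro n z hz
    by_cases hzx : z ∈ Ideal.span {x}
    · exact Submodule.mem_sup_left hzx
    · have hzform : ∃ i : ℕ, z ∉ Ideal.span {x} ⊔ Ideal.span {y ^ i} := by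
        have hsp : Ideal.span ({y ^ k} : Set R) ≤ Ideal.span {x} :=
          Ideal.span_le.mpr (Set.singleton_subset_iff.mpr hk)
        exact ⟨k, fun hcon => hzx ((sup_le le_rfl hsp) hcon)⟩
      obtain ⟨j, w, γ, hw, hzeq⟩ := aux_form hm z hzform
      obtain ⟨w', hw'⟩ := hw.exists_left_inv
      have hyj : y ^ j ∈ Jn n := by
        have heq : y ^ j = w' * z - w' * γ * x := by
          linear_combination (-w') * hzeq - y ^ j * hw'
        rw [heq]
        exact Submodule.sub_mem _ (Ideal.mul_mem_left _ _ hz)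
          (Ideal.mul_mem_left _ _ (hxJ n))
      have hdj : d n ≤ j := Nat.find_min' _ hyj
      have hyjd : y ^ j ∈ Ideal.span ({y ^ d n} : Set R) :=
        Ideal.mem_span_singleton.mpr (pow_dvd_pow y hdj)
      rw [hzeq]
      exact Submodule.add_mem _
        (Submodule.mem_sup_right (Ideal.mul_mem_left _ _ hyjd))
        (Submodule.mem_sup_left (Ideal.mem_span_singleton'.mpr ⟨γ, rfl⟩))
  have hdmono : Monotone d := by
    intro n n' hnn'
    exact Nat.find_min' _ (hJanti n n' hnn' (hdspec n'))
  have hstab : ∃ N, d N = d (N + 1) := by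
    by_contra hcon
    push_neg at hcon
    have hgrow : ∀ n, n ≤ d n := by
      intro n
      induction n with
      | zero => omega
      | succ n ih =>
        have h1 : d n ≤ d (n + 1) := hdmono (Nat.le_succ n)
        have h2 := hcon n
        omega
    have := hgrow (k + 1)
    have := hdk (k + 1)
    omega
  obtain ⟨N, hN⟩ := hstab
  have hsub : Pn N ≤ Pn (N + 1) ⊔ (maximalIdeal R) • (Pn N) := by
    intro z hz
    have hzJ : z ∈ Jn (N + 1) := by
      have h1 : z ∈ Ideal.span {x} ⊔ Ideal.span {y ^ d (N + 1)} := by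
        rw [← hN]
        exact hstruct N (Submodule.mem_sup_right hz)
      have h2 : Ideal.span {y ^ d (N + 1)} ≤ Jn (N + 1) :=
        Ideal.span_le.mpr (Set.singleton_subset_iff.mpr (hdspec (N + 1)))
      have h3 : Ideal.span {x} ⊔ Ideal.span {y ^ d (N + 1)} ≤ Jn (N + 1) :=
        sup_le le_sup_left h2
      exact h3 h1
    obtain ⟨u, hu, v, hv, huv⟩ := Submodule.mem_sup.mp hzJ
    obtain ⟨γ, hγ⟩ := Ideal.mem_span_singleton'.mp hu
    have hγx : γ * x ∈ Pn N := by
      have heq : γ * x = z - v := by rw [← huv, ← hγ]; ring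
      rw [heq]
      exact Submodule.sub_mem _ hz (hPnanti N hv)
    have hγPn : γ ∈ Pn N := hcancel N γ hγx
    have heq2 : z = v + γ * x := by rw [← huv, hγ]; ring
    rw [heq2]
    refine Submodule.add_mem _ (Submodule.mem_sup_left hv) (Submodule.mem_sup_right ?_)
    rw [smul_eq_mul]
    exact mul_comm x γ ▸ Ideal.mul_mem_mul hxm hγPn
  have hjac : maximalIdeal R ≤ Ideal.jacobson ⊥ := by
    rw [IsLocalRing.jacobson_eq_maximalIdeal ⊥ bot_ne_top]
  have hNak : Pn N ≤ Pn (N + 1) :=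
    Submodule.le_of_le_smul_of_le_jacobson_bot (IsNoetherian.noetherian _) hjac hsub
  have hPneq : Pn N = Pn (N + 1) := le_antisymm hNak (hPnanti N)
  have hPeq : P ^ N = P ^ (N + 1) := by
    have h1 := IsLocalization.map_comap p.primeCompl Rp (P ^ N)
    have h2 := IsLocalization.map_comap p.primeCompl Rp (P ^ (N + 1))
    rw [← h1, ← h2]
    exact congrArg (Ideal.map φ) hPneq
  have hPbot : P ^ N = ⊥ := by
    apply Submodule.eq_bot_of_le_smul_of_le_jacobson_bot P (P ^ N) (IsNoetherian.noetherian _)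
    · rw [smul_eq_mul]
      calc P ^ N = P ^ (N + 1) := hPeq
        _ = P ^ N * P := pow_succ P N
        _ = P * P ^ N := mul_comm _ _
        _ ≤ P * P ^ N := le_refl _
    · rw [IsLocalRing.jacobson_eq_maximalIdeal ⊥ bot_ne_top, ← hPmax]
  obtain ⟨z, hzp, hz0⟩ := (Submodule.ne_bot_iff p).mp hp0
  have hzP : φ z ∈ P := Ideal.mem_map_of_mem _ hzp
  have hzPN : (φ z) ^ N ∈ P ^ N := Ideal.pow_mem_pow hzP N
  rw [hPbot] at hzPN
  have hz' : φ (z ^ N) = 0 := by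
    rw [map_pow]
    exact (Submodule.mem_bot _).mp hzPN
  have hinj : Function.Injective φ :=
    IsLocalization.injective Rp p.primeCompl_le_nonZeroDivisors
  have hzN : z ^ N = 0 := hinj (by rw [hz', map_zero])
  rcases Nat.eq_zero_or_pos N with hN0 | hNpos
  · rw [hN0, pow_zero] at hzN
    exact one_ne_zero hzN
  · exact hz0 (pow_eq_zero_iff (by omega)|>.mp hzN)

lemma aux_colonxy {x y : R} (hm : maximalIdeal R = Ideal.span {x, y})
    (hdim : ringKrullDim R = 2) {α β : R} (h : α * y = β * x) : α ∈ Ideal.span {x} := by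
  have hxm : x ∈ maximalIdeal R := hm ▸ Ideal.subset_span (by simp)
  have hym : y ∈ maximalIdeal R := hm ▸ Ideal.subset_span (by simp)
  by_contra hα
  have hform : ∃ i : ℕ, α ∉ Ideal.span {x} ⊔ Ideal.span {y ^ i} := by
    by_contra hall
    push_neg at hall
    refine hα (aux_kiq hxm α fun i => ?_)
    have hle : Ideal.span {x} ⊔ Ideal.span {y ^ i} ≤ Ideal.span {x} ⊔ maximalIdeal R ^ i :=
      sup_le_sup_left (Ideal.span_le.mpr
        (Set.singleton_subset_iff.mpr (Ideal.pow_mem_pow hym i))) _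
    exact hle (hall i)
  obtain ⟨j, w, γ, hw, hzeq⟩ := aux_form hm α hform
  obtain ⟨w', hw'⟩ := hw.exists_left_inv
  have hkey : y ^ (j + 1) = (w' * β - w' * γ * y) * x := by
    linear_combination w' * h - w' * y * hzeq - y ^ (j + 1) * hw'
  exact aux_notnil hm hdim (j + 1) (by
    rw [hkey]
    exact Ideal.mem_span_singleton'.mpr ⟨w' * β - w' * γ * y, rfl⟩)

lemma aux_colonam {x y : R} (hm : maximalIdeal R = Ideal.span {x, y})
    (hdim : ringKrullDim R = 2) (a z : R) (ha : a ≠ 0)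
    (h1 : z * x ∈ Ideal.span {a}) (h2 : z * y ∈ Ideal.span {a}) : z ∈ Ideal.span {a} := by
  obtain ⟨α, hα⟩ := Ideal.mem_span_singleton'.mp h1
  obtain ⟨β, hβ⟩ := Ideal.mem_span_singleton'.mp h2
  have hxy : α * y = β * x := by
    have hc : a * (α * y) = a * (β * x) := by linear_combination y * hα - x * hβ
    exact mul_left_cancel₀ ha hc
  obtain ⟨γ, hγ⟩ := Ideal.mem_span_singleton'.mp (aux_colonxy hm hdim hxy)
  have hm' : maximalIdeal R = Ideal.span {y, x} := by rw [hm, Set.pair_comm]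
  have hx0 : x ≠ 0 := by
    intro h0
    apply aux_notnil hm' hdim 1
    rw [pow_one, h0]
    exact Ideal.zero_mem _
  have hc2 : x * z = x * (γ * a) := by linear_combination (-1 : R) * hα - a * hγ
  exact Ideal.mem_span_singleton'.mpr ⟨γ, (mul_left_cancel₀ hx0 hc2).symm⟩

lemma aux_soc {x y : R} (hm : maximalIdeal R = Ideal.span {x, y})
    (hdim : ringKrullDim R = 2) (a : R) (ha : a ≠ 0) :
    ¬ IsAssociatedPrime (maximalIdeal R) (R ⧸ Ideal.span {a}) := by
  have hxm : x ∈ maximalIdeal R := hm ▸ Ideal.subset_span (by simp)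
  have hym : y ∈ maximalIdeal R := hm ▸ Ideal.subset_span (by simp)
  have hmne : maximalIdeal R ≠ ⊤ := (IsLocalRing.maximalIdeal.isMaximal R).ne_top
  intro hPa
  obtain ⟨hprime, w, hw⟩ := isAssociatedPrime_iff.mp hPa
  obtain ⟨w', rfl⟩ := Ideal.Quotient.mk_surjective w
  have hann : ∀ t : R, t ∈ maximalIdeal R → t * w' ∈ Ideal.span {a} := by
    intro t ht
    rw [hw] at ht
    have := (Submodule.mem_bot _).mp (Submodule.mem_colon_singleton.mp ht)
    have heq : Ideal.Quotient.mk (Ideal.span {a}) (t * w') = 0 := this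
    rwa [Ideal.Quotient.eq_zero_iff_mem] at heq
  have hxw : w' * x ∈ Ideal.span {a} := mul_comm x w' ▸ hann x hxm
  have hyw : w' * y ∈ Ideal.span {a} := mul_comm y w' ▸ hann y hym
  have hw'mem : w' ∈ Ideal.span {a} := aux_colonam hm hdim a w' ha hxw hyw
  have hw0 : Ideal.Quotient.mk (Ideal.span {a}) w' = 0 :=
    Ideal.Quotient.eq_zero_iff_mem.mpr hw'mem
  apply hmne
  rw [hw, Ideal.eq_top_iff_one]
  rw [Submodule.mem_colon_singleton, hw0, smul_zero]
  exact Submodule.zero_mem _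

lemma aux_reg {x y : R} (hm : maximalIdeal R = Ideal.span {x, y})
    (hdim : ringKrullDim R = 2) (a b : R) (ha : a ≠ 0)
    (hrad : (Ideal.span {a, b}).radical = maximalIdeal R) :
    ∀ z, z * b ∈ Ideal.span {a} → z ∈ Ideal.span {a} := by
  intro z hzb
  by_contra hz
  have hne : Ideal.Quotient.mk (Ideal.span {a}) z ≠ 0 := fun h =>
    hz (Ideal.Quotient.eq_zero_iff_mem.mp h)
  obtain ⟨P, hP, hle⟩ :=
    exists_le_isAssociatedPrime_of_isNoetherianRing R (Ideal.Quotient.mk (Ideal.span {a}) z) hne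
  have hbP : b ∈ P := by
    apply hle
    rw [Submodule.mem_colon_singleton, Submodule.mem_bot]
    have : Ideal.Quotient.mk (Ideal.span {a}) (b * z) = 0 :=
      Ideal.Quotient.eq_zero_iff_mem.mpr (mul_comm z b ▸ hzb)
    exact this
  have haP : a ∈ P := by
    obtain ⟨hPprime, v, hv⟩ := isAssociatedPrime_iff.mp hP
    obtain ⟨v', rfl⟩ := Ideal.Quotient.mk_surjective v
    rw [hv, Submodule.mem_colon_singleton, Submodule.mem_bot]
    have : Ideal.Quotient.mk (Ideal.span {a}) (a * v') = 0 :=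
      Ideal.Quotient.eq_zero_iff_mem.mpr (Ideal.mul_mem_right v' _
        (Ideal.mem_span_singleton_self a))
    exact this
  have hPm : P = maximalIdeal R := by
    have h1 : Ideal.span {a, b} ≤ P := Ideal.span_le.mpr (by
      rintro t (rfl | rfl)
      exacts [haP, hbP])
    have h2 : maximalIdeal R ≤ P := by
      rw [← hrad]
      exact hP.isPrime.radical_le_iff.mpr h1
    exact le_antisymm (le_maximalIdeal hP.isPrime.ne_top) h2
  exact aux_soc hm hdim a ha (hPm ▸ hP)

end Aux

theorem stmt_3 (R : Type*) [CommRing R] [IsDomain R] [IsNoetherianRing R] [IsLocalRing R]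
    (hdim : ringKrullDim R = 2) (x y : R)
    (hm : maximalIdeal R = Ideal.span {x, y})
    (f₁₁ f₁₂ f₂₁ f₂₂ : R)
    (h11 : f₁₁ ∈ maximalIdeal R ^ 2) (h12 : f₁₂ ∈ maximalIdeal R ^ 2)
    (h21 : f₂₁ ∈ maximalIdeal R ^ 2) (h22 : f₂₂ ∈ maximalIdeal R ^ 2)
    (a b c : R) (ha : a = f₁₁ * x + f₁₂ * y) (hb : b = f₂₁ * x + f₂₂ * y)
    (hc : c = f₁₁ * f₂₂ - f₁₂ * f₂₁)
    (hQ : (Ideal.span {a, b} : Ideal R).radical = maximalIdeal R) :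
    Submodule.colon (Ideal.span {a, b} : Ideal R) (Ideal.span {c}) = maximalIdeal R := by
  have hmne : maximalIdeal R ≠ ⊤ := (IsLocalRing.maximalIdeal.isMaximal R).ne_top
  have hxm : x ∈ maximalIdeal R := hm ▸ Ideal.subset_span (by simp)
  have hym : y ∈ maximalIdeal R := hm ▸ Ideal.subset_span (by simp)
  have hm' : maximalIdeal R = Ideal.span {y, x} := by rw [hm, Set.pair_comm]
  have hx0 : x ≠ 0 := by
    intro h0
    apply aux_notnil hm' hdim 1
    rw [pow_one, h0]; exact Ideal.zero_mem _
  have ham : a ∈ maximalIdeal R := by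
    rw [← hQ]
    exact Ideal.le_radical (Ideal.subset_span (by simp))
  have hbm : b ∈ maximalIdeal R := by
    rw [← hQ]
    exact Ideal.le_radical (Ideal.subset_span (by simp))
  -- the span with the two generators swapped
  have hQ' : (Ideal.span {b, a} : Ideal R).radical = maximalIdeal R := by
    rw [Set.pair_comm b a]; exact hQ
  -- both generators are nonzero
  have hbot : ∀ t : R, t ∈ maximalIdeal R → (Ideal.span {t}).radical = maximalIdeal R → False := by
    intro t htm htrad
    by_cases ht0 : t = 0
    · subst ht0
      rw [Ideal.span_singleton_eq_bot.mpr rfl] at htrad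
      have : (⊥ : Ideal R).radical = ⊥ := Ideal.bot_prime.radical
      rw [this] at htrad
      exact hx0 (by simpa [← htrad] using hxm)
    · have htrad' : (Ideal.span {t, t}).radical = maximalIdeal R := by
        rw [Set.pair_eq_singleton]; exact htrad
      have h1 : (1 : R) ∈ Ideal.span {t} :=
        aux_reg hm hdim t t ht0 htrad' 1 (by rw [one_mul]; exact Ideal.mem_span_singleton_self t)
      rw [Ideal.mem_span_singleton] at h1
      exact hmne (Ideal.eq_top_of_isUnit_mem _ htm (isUnit_of_dvd_one h1))
  have ha0 : a ≠ 0 := by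
    intro h0
    apply hbot b hbm
    rw [← hQ, h0]
    congr 1
    rw [show ({(0 : R), b} : Set R) = insert 0 {b} from rfl, Ideal.span_insert,
      Ideal.span_singleton_eq_bot.mpr rfl, bot_sup_eq]
  have hb0 : b ≠ 0 := by
    intro h0
    apply hbot a ham
    rw [← hQ', h0]
    congr 1
    rw [show ({(0 : R), a} : Set R) = insert 0 {a} from rfl, Ideal.span_insert,
      Ideal.span_singleton_eq_bot.mpr rfl, bot_sup_eq]
  have hA : ∀ z, z * b ∈ Ideal.span {a} → z ∈ Ideal.span {a} := aux_reg hm hdim a b ha0 hQ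
  have hB : ∀ z, z * a ∈ Ideal.span {b} → z ∈ Ideal.span {b} := aux_reg hm hdim b a hb0 hQ'
  -- c is nonzero
  have hc0 : c ≠ 0 := by
    intro h0
    have h1 : f₂₂ * a = f₁₂ * b := by
      linear_combination f₂₂ * ha - f₁₂ * hb - x * hc + x * h0
    have h2 : f₂₁ * a = f₁₁ * b := by
      linear_combination f₂₁ * ha - f₁₁ * hb + y * hc - y * h0
    obtain ⟨t, ht⟩ := Ideal.mem_span_singleton'.mp
      (hB f₂₂ (Ideal.mem_span_singleton'.mpr ⟨f₁₂, h1.symm⟩))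
    obtain ⟨u, hu⟩ := Ideal.mem_span_singleton'.mp
      (hB f₂₁ (Ideal.mem_span_singleton'.mpr ⟨f₁₁, h2.symm⟩))
    -- f₁₂ = t * a,  f₁₁ = u * a
    have hf12 : f₁₂ = t * a := by
      have : b * f₁₂ = b * (t * a) := by linear_combination -h1 - a * ht
      exact mul_left_cancel₀ hb0 this
    have hf11 : f₁₁ = u * a := by
      have : b * f₁₁ = b * (u * a) := by linear_combination -h2 - a * hu
      exact mul_left_cancel₀ hb0 this
    have hkey : a * (1 - (u * x + t * y)) = 0 := by
      linear_combination ha + x * hf11 + y * hf12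
    rcases mul_eq_zero.mp hkey with h | h
    · exact ha0 h
    · apply hmne
      rw [Ideal.eq_top_iff_one]
      have : (1 : R) = u * x + t * y := by linear_combination h
      rw [this]
      exact Ideal.add_mem _ (Ideal.mul_mem_left _ u hxm) (Ideal.mul_mem_left _ t hym)
  -- forward inclusion: m ≤ colon
  have hforward : maximalIdeal R ≤
      Submodule.colon (Ideal.span {a, b} : Ideal R) (Ideal.span {c}) := by
    rw [hm, Ideal.span_le]
    have hmemx : x ∈ Submodule.colon (Ideal.span {a, b} : Ideal R) (Ideal.span {c}) := by
      rw [Submodule.mem_colon]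
      intro p hp
      obtain ⟨s, hs⟩ := Ideal.mem_span_singleton'.mp hp
      have hxc : f₂₂ * a + (-f₁₂) * b = x * c := by
        linear_combination f₂₂ * ha - f₁₂ * hb - x * hc
      have : x • p = s * (f₂₂ * a + (-f₁₂) * b) := by
        rw [smul_eq_mul, hxc, ← hs]; ring
      rw [this]
      exact Ideal.mul_mem_left _ s (Ideal.mem_span_pair.mpr ⟨f₂₂, -f₁₂, rfl⟩)
    have hmemy : y ∈ Submodule.colon (Ideal.span {a, b} : Ideal R) (Ideal.span {c}) := by
      rw [Submodule.mem_colon]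
      intro p hp
      obtain ⟨s, hs⟩ := Ideal.mem_span_singleton'.mp hp
      have hyc : (-f₂₁) * a + f₁₁ * b = y * c := by
        linear_combination f₁₁ * hb - f₂₁ * ha - y * hc
      have : y • p = s * ((-f₂₁) * a + f₁₁ * b) := by
        rw [smul_eq_mul, hyc, ← hs]; ring
      rw [this]
      exact Ideal.mul_mem_left _ s (Ideal.mem_span_pair.mpr ⟨-f₂₁, f₁₁, rfl⟩)
    rintro t (rfl | rfl)
    exacts [hmemx, hmemy]
  -- reverse inclusion
  refine le_antisymm ?_ hforward
  by_contra hrev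
  -- then the colon ideal is not contained in m, hence contains a unit, hence is ⊤
  have hcQ : c ∈ Ideal.span {a, b} := by
    obtain ⟨z, hz1, hz2⟩ := Set.not_subset.mp hrev
    have hzu : IsUnit z := by
      by_contra hzu
      exact hz2 (IsLocalRing.mem_maximalIdeal z |>.mpr hzu)
    have htop : Submodule.colon (Ideal.span {a, b} : Ideal R) (Ideal.span {c}) = ⊤ :=
      Ideal.eq_top_of_isUnit_mem _ hz1 hzu
    have h1 : (1 : R) ∈ Submodule.colon (Ideal.span {a, b} : Ideal R) (Ideal.span {c}) := by
      rw [htop]; exact Submodule.mem_top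
    have := Submodule.mem_colon.mp h1 c (Ideal.mem_span_singleton_self c)
    rwa [one_smul] at this
  obtain ⟨r, s, hrs⟩ := Ideal.mem_span_pair.mp hcQ
  -- hrs : r * a + s * b = c
  have e1 : (f₁₂ + s * x) * b = (f₂₂ - r * x) * a := by
    linear_combination -f₂₂ * ha + f₁₂ * hb + x * hrs + x * hc
  have e2 : (f₂₁ + r * y) * a = (f₁₁ - s * y) * b := by
    linear_combination f₂₁ * ha - f₁₁ * hb + y * hrs + y * hc
  obtain ⟨t, ht⟩ := Ideal.mem_span_singleton'.mp
    (hA (f₁₂ + s * x) (Ideal.mem_span_singleton'.mpr ⟨f₂₂ - r * x, e1.symm⟩))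
  obtain ⟨u, hu⟩ := Ideal.mem_span_singleton'.mp
    (hB (f₂₁ + r * y) (Ideal.mem_span_singleton'.mpr ⟨f₁₁ - s * y, e2.symm⟩))
  -- ht : t * a = f₁₂ + s * x,  hu : u * b = f₂₁ + r * y
  have hf22 : f₂₂ - r * x = t * b := by
    have : a * (f₂₂ - r * x) = a * (t * b) := by linear_combination -e1 - b * ht
    exact mul_left_cancel₀ ha0 this
  have hf11 : f₁₁ - s * y = u * a := by
    have : b * (f₁₁ - s * y) = b * (u * a) := by linear_combination -e2 - a * hu
    exact mul_left_cancel₀ hb0 this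
  have hkey : c * (1 - (u * x + t * y)) = 0 := by
    linear_combination hc + f₂₂ * hf11 + (s * y + u * a) * hf22 + f₂₁ * ht
      + (t * a - s * x) * hu + (u * x + t * y) * hrs
  rcases mul_eq_zero.mp hkey with h | h
  · exact hc0 h
  · apply hmne
    rw [Ideal.eq_top_iff_one]
    have : (1 : R) = u * x + t * y := by linear_combination h
    rw [this]
    exact Ideal.add_mem _ (Ideal.mul_mem_left _ u hxm) (Ideal.mul_mem_left _ t hym)
end

section
/- Let (R, m) be a two-dimensional regular local ring with m = (x, y). Suppose a = f_{11} x + f_{12} y and b = f_{21} x + f_{22} y with all f_{ij} ∈ m^2 and Q = (a, b) a parameter ideal. Let c = f_{11} f_{22} - f_{12} f_{21}. Then Q : m = Q + (c). -/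
set_option linter.unusedSectionVars false
set_option linter.unusedVariables false

open IsLocalRing

open Ideal

section Artinian
universe u v
variable {R : Type u} [CommRing R]

lemma my_isArtinian_of_smul_eq_bot {M : Type v} [AddCommGroup M] [Module R M]
    [IsNoetherian R M] {m : Ideal R} (hm : m.IsMaximal)
    (h : m • (⊤ : Submodule R M) = ⊥) : IsArtinian R M := by
  have hsimple : ∀ z : M, z ≠ 0 → IsSimpleModule R (Submodule.span R {z}) := by
    intro z hz
    rw [isSimpleModule_iff_isAtom]
    constructor
    · simpa [Submodule.span_singleton_eq_bot] using hz
    · intro W hW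
      by_contra hWbot
      obtain ⟨w, hwW, hw0⟩ := Submodule.exists_mem_ne_zero_of_ne_bot hWbot
      obtain ⟨r, rfl⟩ := Submodule.mem_span_singleton.mp (hW.le hwW)
      have hrm : r ∉ m := by
        intro hr
        exact hw0 (by simpa using (h ▸ Submodule.smul_mem_smul hr Submodule.mem_top : _ ∈ (⊥ : Submodule R M)))
      obtain ⟨s, i, him, hsi⟩ := hm.exists_inv hrm
      have hiz : i • z = 0 := by
        simpa using (h ▸ Submodule.smul_mem_smul him Submodule.mem_top : _ ∈ (⊥ : Submodule R M))
      have hzw : z ∈ W := by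
        have hz1 : z = s • (r • z) + i • z := by
          rw [smul_smul, ← add_smul, hsi, one_smul]
        rw [hz1, hiz, add_zero]
        exact W.smul_mem s hwW
      exact hW.ne (le_antisymm hW.le (Submodule.span_le.mpr (by simpa using hzw)))
  -- semisimple
  have hss : IsSemisimpleModule R M := by
    apply IsSemisimpleModule.of_sSup_simples_eq_top
    rw [eq_top_iff]
    intro z _
    by_cases hz : z = 0
    · simp [hz]
    · exact (le_sSup (s := {W : Submodule R M | IsSimpleModule R W}) (hsimple z hz))
        (Submodule.mem_span_singleton_self z)
  have : Module.Finite R M := Module.finite_def.mpr (IsNoetherian.noetherian ⊤)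
  infer_instance

lemma my_isArtinian_of_pow_smul_eq_bot {m : Ideal R} (hm : m.IsMaximal) (n : ℕ) :
    ∀ (M : Type v) [AddCommGroup M] [Module R M] [IsNoetherian R M],
      m ^ n • (⊤ : Submodule R M) = ⊥ → IsArtinian R M := by
  induction n with
  | zero =>
    intro M _ _ _ h
    rw [pow_zero, one_eq_top, Submodule.top_smul] at h
    have : Subsingleton M := by
      refine subsingleton_of_forall_eq 0 fun z => ?_
      have : z ∈ (⊥ : Submodule R M) := h ▸ Submodule.mem_top
      simpa using this
    infer_instance
  | succ n ih =>
    intro M _ _ _ h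
    set K : Submodule R M := m • ⊤ with hK
    have hKkill : m ^ n • (⊤ : Submodule R (↥K)) = ⊥ := by
      apply Submodule.map_injective_of_injective (Submodule.injective_subtype K)
      rw [Submodule.map_smul'', Submodule.map_bot, Submodule.map_subtype_top]
      rw [hK, ← Submodule.smul_assoc, smul_eq_mul, ← pow_succ, h]
    have hQkill : m • (⊤ : Submodule R (M ⧸ K)) = ⊥ := by
      have : Submodule.map K.mkQ (m • (⊤ : Submodule R M)) = m • (⊤ : Submodule R (M ⧸ K)) := by
        rw [Submodule.map_smul'', Submodule.map_top, Submodule.range_mkQ]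
      rw [← this, ← hK]
      rw [eq_bot_iff]
      intro z hz
      obtain ⟨w, hw, rfl⟩ := Submodule.mem_map.mp hz
      simpa [Submodule.Quotient.mk_eq_zero] using hw
    haveI hA1 : IsArtinian R (↥K) := ih (↥K) hKkill
    haveI hA2 : IsArtinian R (M ⧸ K) := my_isArtinian_of_smul_eq_bot hm hQkill
    exact isArtinian_of_range_eq_ker K.subtype K.mkQ
      (by rw [Submodule.range_subtype, Submodule.ker_mkQ])

open IsLocalRing in
lemma my_pit {R : Type u} [CommRing R] [IsDomain R] [IsNoetherianRing R] [IsLocalRing R]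
    {g : R} (hg : g ∈ maximalIdeal R) {N : ℕ}
    (hN : maximalIdeal R ^ N ≤ Ideal.span {g}) {p : Ideal R} (hp : p.IsPrime)
    (hp0 : p ≠ ⊥) (hpm : p < maximalIdeal R) : False := by
  haveI := hp
  -- g ∉ p
  have hgp : g ∉ p := by
    intro hgmem
    have hsp : Ideal.span {g} ≤ p := Ideal.span_le.mpr (by simpa using hgmem)
    have : maximalIdeal R ≤ p := Ideal.IsPrime.le_of_pow_le (hN.trans hsp)
    exact absurd this (not_le_of_gt hpm)
  -- localization at p
  set Rp := Localization.AtPrime p with hRp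
  have hle : p.primeCompl ≤ nonZeroDivisors R := fun s hs =>
    mem_nonZeroDivisors_of_ne_zero (fun h0 => hs (h0 ▸ p.zero_mem))
  haveI : IsDomain Rp := IsLocalization.isDomain_of_le_nonZeroDivisors (M := p.primeCompl) Rp hle
  haveI : IsNoetherianRing Rp := IsLocalization.isNoetherianRing p.primeCompl Rp ‹_›
  set φ := algebraMap R Rp with hφ
  set P := maximalIdeal Rp with hP
  have hcomapP : Ideal.comap φ P = p := Localization.AtPrime.comap_maximalIdeal
  set C : ℕ → Ideal R := fun n => Ideal.comap φ (P ^ n) with hC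
  have hCanti : ∀ {i j : ℕ}, i ≤ j → C j ≤ C i := by
    intro i j hij
    exact Ideal.comap_mono (Ideal.pow_le_pow_right hij)
  set J : Ideal R := Ideal.span {g} with hJ
  -- Artinian quotient
  haveI hart : IsArtinian R (R ⧸ J) := by
    apply my_isArtinian_of_pow_smul_eq_bot (maximalIdeal.isMaximal R) N
    rw [eq_bot_iff]
    intro z hz
    have : Submodule.map J.mkQ ((maximalIdeal R ^ N : Ideal R) • (⊤ : Submodule R R))
        = (maximalIdeal R ^ N) • (⊤ : Submodule R (R ⧸ J)) := by
      rw [Submodule.map_smul'', Submodule.map_top, Submodule.range_mkQ]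
    rw [← this] at hz
    obtain ⟨w, hw, rfl⟩ := Submodule.mem_map.mp hz
    have hwJ : w ∈ J := by
      have : (maximalIdeal R ^ N : Ideal R) • (⊤ : Submodule R R) ≤ J := by
        apply Submodule.smul_le.mpr
        intro r hr n _
        exact Ideal.mul_mem_right n J (hN hr)
      exact this hw
    exact (Submodule.Quotient.mk_eq_zero J).mpr hwJ
  -- stabilization
  set E : ℕ →o (Submodule R (R ⧸ J))ᵒᵈ :=
    ⟨fun n => Submodule.map J.mkQ (C n ⊔ J), by
      intro i j hij
      exact Submodule.map_mono (sup_le_sup_right (hCanti hij) J)⟩ with hE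
  obtain ⟨n, hn⟩ := IsArtinian.monotone_stabilizes E
  have hstab : C n ⊔ J = C (n + 1) ⊔ J := by
    have h1 : Submodule.map J.mkQ (C n ⊔ J) = Submodule.map J.mkQ (C (n + 1) ⊔ J) :=
      hn (n + 1) (Nat.le_succ n)
    have h2 := congrArg (Submodule.comap J.mkQ) h1
    rwa [Submodule.comap_map_eq, Submodule.comap_map_eq, Submodule.ker_mkQ,
      sup_assoc, sup_idem, sup_assoc, sup_idem] at h2
  -- C n ≤ C (n+1) ⊔ J • C n
  have hkey : C n ≤ C (n + 1) ⊔ J • C n := by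
    intro r hr
    have : r ∈ C (n + 1) ⊔ J := by rw [← hstab]; exact Submodule.mem_sup_left hr
    obtain ⟨b, hb, j, hj, rfl⟩ := Submodule.mem_sup.mp this
    obtain ⟨t, rfl⟩ := Ideal.mem_span_singleton'.mp hj
    have htg : t * g ∈ C n := by
      have : (b + t * g) - b ∈ C n := Submodule.sub_mem _ hr (hCanti (Nat.le_succ n) hb)
      simpa using this
    have hunit : IsUnit (φ g) := IsLocalization.map_units Rp (⟨g, hgp⟩ : p.primeCompl)
    have htC : t ∈ C n := by
      have : φ t * φ g ∈ P ^ n := by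
        have := htg
        rwa [hC, Ideal.mem_comap, RingHom.map_mul] at this
      rw [hC, Ideal.mem_comap]
      exact (Ideal.mul_unit_mem_iff_mem (P ^ n) hunit).mp this
    apply Submodule.add_mem
    · exact Submodule.mem_sup_left hb
    · apply Submodule.mem_sup_right
      rw [show t * g = g • t from by rw [smul_eq_mul]; ring]
      exact Submodule.smul_mem_smul (Ideal.mem_span_singleton_self g) htC
  -- Nakayama
  have hCle : C n ≤ C (n + 1) := by
    have hNak := Submodule.sup_eq_sup_smul_of_le_smul_of_le_jacobson
      (I := J) (J := ⊥) (N := C (n+1)) (N' := C n)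
      (IsNoetherian.noetherian (C n))
      (le_trans (Ideal.span_le.mpr (by simpa using hg)) (maximalIdeal_le_jacobson ⊥))
      hkey
    rw [Submodule.bot_smul, sup_bot_eq] at hNak
    exact le_trans le_sup_right hNak.le
  -- P^n = ⊥
  have hPP : P ^ n ≤ P • P ^ n := by
    have h1 : P ^ n = Ideal.map φ (C n) := (IsLocalization.map_comap p.primeCompl Rp (P ^ n)).symm
    have h2 : Ideal.map φ (C (n+1)) = P ^ (n+1) := IsLocalization.map_comap p.primeCompl Rp _
    calc P ^ n = Ideal.map φ (C n) := h1
      _ ≤ Ideal.map φ (C (n+1)) := Ideal.map_mono hCle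
      _ = P ^ (n + 1) := h2
      _ = P • P ^ n := by rw [smul_eq_mul, pow_succ, mul_comm]
  have hPbot : P ^ n = ⊥ := Submodule.eq_bot_of_le_smul_of_le_jacobson_bot P (P ^ n)
    (IsNoetherian.noetherian (P ^ n)) hPP (maximalIdeal_le_jacobson ⊥)
  -- contradiction
  obtain ⟨f, hfp, hf0⟩ := Submodule.exists_mem_ne_zero_of_ne_bot hp0
  have hfP : φ f ∈ P := by rw [← hcomapP] at hfp; exact hfp
  have hfn : (φ f) ^ n ∈ P ^ n := Ideal.pow_mem_pow hfP n
  rw [hPbot, Ideal.mem_bot] at hfn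
  have : φ f = 0 := by
    rcases Nat.eq_zero_or_pos n with h0 | h0
    · exfalso
      rw [h0, pow_zero] at hfn
      exact one_ne_zero hfn
    · exact pow_eq_zero_iff (Nat.pos_iff_ne_zero.mp h0) |>.mp hfn
  exact hf0 (IsLocalization.injective Rp hle (by rw [map_zero]; exact this))

section RLR
open IsLocalRing
variable {R : Type u} [CommRing R] [IsDomain R] [IsNoetherianRing R] [IsLocalRing R]

lemma my_half_pow {x y : R} (n : ℕ) :
    (Ideal.span {x, y}) ^ n ≤ Ideal.span {x} ⊔ Ideal.span {y ^ n} := by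
  have hsplit : (Ideal.span {x, y} : Ideal R) = Ideal.span {x} ⊔ Ideal.span {y} :=
    Ideal.span_insert x {y}
  induction n with
  | zero => simp
  | succ n ih =>
    calc (Ideal.span {x, y} : Ideal R) ^ (n + 1)
        = (Ideal.span {x, y}) ^ n * Ideal.span {x, y} := pow_succ _ n
      _ ≤ (Ideal.span {x} ⊔ Ideal.span {y ^ n}) * (Ideal.span {x} ⊔ Ideal.span {y}) :=
          Ideal.mul_mono ih (le_of_eq hsplit)
      _ ≤ Ideal.span {x} ⊔ Ideal.span {y ^ (n + 1)} := by
          rw [Ideal.sup_mul, Ideal.mul_sup, Ideal.mul_sup]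
          apply sup_le (sup_le ?_ ?_) (sup_le ?_ ?_)
          · exact le_trans Ideal.mul_le_left le_sup_left
          · exact le_trans Ideal.mul_le_left le_sup_left
          · exact le_trans Ideal.mul_le_right le_sup_left
          · rw [Ideal.span_singleton_mul_span_singleton, ← pow_succ]
            exact le_sup_right

lemma my_pow_pair {x y : R} (n k : ℕ) :
    (Ideal.span {x, y}) ^ (n + k) ≤ Ideal.span {x ^ n} ⊔ Ideal.span {y ^ k} := by
  have hsplit : (Ideal.span {x, y} : Ideal R) = Ideal.span {x} ⊔ Ideal.span {y} :=
    Ideal.span_insert x {y}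
  induction n generalizing k with
  | zero => simp
  | succ n ihn =>
    induction k with
    | zero => simp
    | succ k ihk =>
      have he : n + 1 + (k + 1) = (n + (k + 1)) + 1 := by ring
      have he2 : n + (k + 1) = (n + 1) + k := by ring
      calc (Ideal.span {x, y} : Ideal R) ^ (n + 1 + (k + 1))
          = (Ideal.span {x, y}) ^ (n + (k + 1)) * Ideal.span {x, y} := by rw [he, pow_succ]
        _ ≤ (Ideal.span {x, y}) ^ (n + (k + 1)) * (Ideal.span {x} ⊔ Ideal.span {y}) :=
            Ideal.mul_mono le_rfl (le_of_eq hsplit)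
        _ = (Ideal.span {x, y}) ^ (n + (k + 1)) * Ideal.span {x}
            ⊔ (Ideal.span {x, y}) ^ (n + (k + 1)) * Ideal.span {y} := Ideal.mul_sup _ _ _
        _ ≤ Ideal.span {x ^ (n + 1)} ⊔ Ideal.span {y ^ (k + 1)} := by
            apply sup_le
            · calc (Ideal.span {x, y} : Ideal R) ^ (n + (k + 1)) * Ideal.span {x}
                  ≤ (Ideal.span {x ^ n} ⊔ Ideal.span {y ^ (k + 1)}) * Ideal.span {x} :=
                    Ideal.mul_mono (ihn (k + 1)) le_rfl
                _ ≤ Ideal.span {x ^ (n + 1)} ⊔ Ideal.span {y ^ (k + 1)} := by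
                    rw [Ideal.sup_mul]
                    apply sup_le
                    · rw [Ideal.span_singleton_mul_span_singleton, ← pow_succ]
                      exact le_sup_left
                    · exact le_trans Ideal.mul_le_left le_sup_right
            · calc (Ideal.span {x, y} : Ideal R) ^ (n + (k + 1)) * Ideal.span {y}
                  = (Ideal.span {x, y}) ^ ((n + 1) + k) * Ideal.span {y} := by rw [he2]
                _ ≤ (Ideal.span {x ^ (n + 1)} ⊔ Ideal.span {y ^ k}) * Ideal.span {y} :=
                    Ideal.mul_mono ihk le_rfl
                _ ≤ Ideal.span {x ^ (n + 1)} ⊔ Ideal.span {y ^ (k + 1)} := by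
                    rw [Ideal.sup_mul]
                    apply sup_le
                    · exact le_trans Ideal.mul_le_left le_sup_left
                    · rw [Ideal.span_singleton_mul_span_singleton, ← pow_succ]
                      exact le_sup_right


lemma my_not_principal
    (hchain : ∃ p : Ideal R, p.IsPrime ∧ p ≠ ⊥ ∧ p < maximalIdeal R) (t : R) :
    maximalIdeal R ≠ Ideal.span {t} := by
  intro hmt
  obtain ⟨p, hp, hp0, hpm⟩ := hchain
  have htp : t ∉ p := by
    intro ht
    have : maximalIdeal R ≤ p := by
      rw [hmt]; exact Ideal.span_le.mpr (by simpa using ht)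
    exact absurd this (not_le_of_gt hpm)
  have hle : p ≤ (maximalIdeal R) • p := by
    intro f hf
    have hfm : f ∈ Ideal.span {t} := hmt ▸ le_of_lt hpm hf
    obtain ⟨e, rfl⟩ := Ideal.mem_span_singleton'.mp hfm
    have hep : e ∈ p := ((hp.mul_mem_iff_mem_or_mem.mp hf).resolve_right htp)
    rw [show e * t = t • e from by rw [smul_eq_mul]; ring]
    exact Submodule.smul_mem_smul (hmt ▸ Ideal.mem_span_singleton_self t) hep
  have := Submodule.eq_bot_of_le_smul_of_le_jacobson_bot (maximalIdeal R) p
    (IsNoetherian.noetherian p) hle (maximalIdeal_le_jacobson ⊥)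
  exact hp0 this

lemma my_colon {x y : R} (hm : maximalIdeal R = Ideal.span {x, y})
    (hchain : ∃ p : Ideal R, p.IsPrime ∧ p ≠ ⊥ ∧ p < maximalIdeal R) :
    ∀ z w : R, z * y = w * x → z ∈ Ideal.span {x} := by
  have hxm : x ∈ maximalIdeal R := hm ▸ Ideal.subset_span (by simp)
  have hym : y ∈ maximalIdeal R := hm ▸ Ideal.subset_span (by simp)
  have hynotx : ∀ j : ℕ, y ^ (j + 1) ∈ Ideal.span {x} → False := by
    intro j hyj
    obtain ⟨p, hp, hp0, hpm⟩ := hchain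
    apply my_pit hxm (N := 1 + (j + 1)) ?_ hp hp0 hpm
    · calc maximalIdeal R ^ (1 + (j + 1)) = Ideal.span {x, y} ^ (1 + (j + 1)) := by rw [hm]
        _ ≤ Ideal.span {x ^ 1} ⊔ Ideal.span {y ^ (j + 1)} := my_pow_pair 1 (j + 1)
        _ ≤ Ideal.span {x} := by
            apply sup_le
            · rw [pow_one]
            · exact Ideal.span_le.mpr (by simpa using hyj)
  have claim : ∀ n : ℕ, ∀ z w : R, z * y = w * x →
      z ∈ Ideal.span {x} ⊔ (maximalIdeal R) ^ n := by
    intro n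
    induction n with
    | zero => intro z w _; rw [pow_zero, Ideal.one_eq_top]; exact Submodule.mem_sup_right trivial
    | succ n ih =>
      intro z w hzw
      rcases n with _ | n
      · -- z ∈ (x) ⊔ m
        by_cases hzm : z ∈ maximalIdeal R
        · rw [pow_one]; exact Submodule.mem_sup_right hzm
        · exfalso
          have hzu : IsUnit z := by
            by_contra hzu
            exact hzm ((IsLocalRing.mem_maximalIdeal z).mpr hzu)
          obtain ⟨zu, rfl⟩ := hzu
          have hyx : y ∈ Ideal.span {x} := by
            rw [Ideal.mem_span_singleton']
            refine ⟨(↑zu⁻¹ : R) * w, ?_⟩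
            have := congrArg (fun r => (↑zu⁻¹ : R) * r) hzw
            simpa [mul_assoc, ← mul_assoc (↑zu⁻¹ : R) (↑zu : R) y] using this.symm
          apply my_not_principal hchain x
          apply le_antisymm
          · rw [hm]
            apply Ideal.span_le.mpr
            intro r hr
            rcases hr with h | h
            · exact h ▸ Ideal.mem_span_singleton_self x
            · simp only [Set.mem_singleton_iff] at h
              exact h ▸ hyx
          · exact Ideal.span_le.mpr (by simpa using hxm)
      · -- step
        obtain hz := ih z w hzw
        obtain ⟨u, hu, μ, hμ, rfl⟩ := Submodule.mem_sup.mp hz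
        have hμy : μ * y ∈ Ideal.span {x} := by
          have h1 : (u + μ) * y ∈ Ideal.span {x} := by
            rw [hzw]; exact Ideal.mul_mem_left _ w (Ideal.mem_span_singleton_self x)
          have h2 : u * y ∈ Ideal.span {x} := Ideal.mul_mem_right y _ hu
          have := Submodule.sub_mem _ h1 h2
          rw [show (u + μ) * y - u * y = μ * y from by ring] at this
          exact this
        have hμ2 : μ ∈ Ideal.span {x} ⊔ Ideal.span {y ^ (n + 1)} := by
          have : (maximalIdeal R) ^ (n+1) ≤ Ideal.span {x} ⊔ Ideal.span {y ^ (n + 1)} := by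
            rw [hm]; exact my_half_pow (n + 1)
          exact this hμ
        obtain ⟨u', hu', ν, hν, rfl⟩ := Submodule.mem_sup.mp hμ2
        obtain ⟨β, rfl⟩ := Ideal.mem_span_singleton'.mp hν
        have hβy : β * y ^ (n + 2) ∈ Ideal.span {x} := by
          have h2 : u' * y ∈ Ideal.span {x} := Ideal.mul_mem_right y _ hu'
          have := Submodule.sub_mem _ hμy h2
          rw [show (u' + β * y ^ (n+1)) * y - u' * y = β * y ^ (n + 2) from by ring] at this
          exact this
        by_cases hβm : β ∈ maximalIdeal R
        · -- z ∈ (x) ⊔ m^(n+2)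
          apply Submodule.add_mem
          · exact Submodule.mem_sup_left hu
          · apply Submodule.add_mem
            · exact Submodule.mem_sup_left hu'
            · apply Submodule.mem_sup_right
              have : y ^ (n + 1) ∈ (maximalIdeal R) ^ (n + 1) := Ideal.pow_mem_pow hym _
              have := Ideal.mul_mem_mul hβm this
              rwa [← pow_succ'] at this
        · exfalso
          have hβu : IsUnit β := by
            by_contra h
            exact hβm ((IsLocalRing.mem_maximalIdeal β).mpr h)
          apply hynotx (n + 1)
          exact (Ideal.unit_mul_mem_iff_mem _ hβu).mp hβy
  -- Krull intersection
  intro z w hzw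
  set J : Ideal R := Ideal.span {x} with hJ
  have hJT : J ≠ ⊤ := by
    intro h
    have : (1 : R) ∈ maximalIdeal R := by
      have : (1 : R) ∈ J := h ▸ trivial
      exact Ideal.span_le.mpr (by simpa using hxm) this
    exact (maximalIdeal.isMaximal R).ne_top (Ideal.eq_top_of_isUnit_mem _ this isUnit_one)
  haveI : Nontrivial (R ⧸ J) := Ideal.Quotient.nontrivial_iff.mpr hJT
  haveI : IsLocalRing (R ⧸ J) := IsLocalRing.of_surjective' _ Ideal.Quotient.mk_surjective
  set I : Ideal (R ⧸ J) := Ideal.map (Ideal.Quotient.mk J) (maximalIdeal R) with hI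
  have hIT : I ≠ ⊤ := by
    intro h
    have hcm : Ideal.comap (Ideal.Quotient.mk J) I = maximalIdeal R ⊔ J := by
      rw [hI, Ideal.comap_map_of_surjective _ Ideal.Quotient.mk_surjective,
        ← RingHom.ker_eq_comap_bot, Ideal.mk_ker]
    have : maximalIdeal R ⊔ J = ⊤ := by rw [← hcm, h, Ideal.comap_top]
    rw [sup_eq_left.mpr (Ideal.span_le.mpr (by simpa using hxm))] at this
    exact (maximalIdeal.isMaximal R).ne_top this
  have hKrull := Ideal.iInf_pow_eq_bot_of_isLocalRing I hIT
  have hmem : ∀ n : ℕ, Ideal.Quotient.mk J z ∈ I ^ n := by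
    intro n
    obtain ⟨u, hu, v, hv, hz⟩ := Submodule.mem_sup.mp (claim n z w hzw)
    have : Ideal.Quotient.mk J z = Ideal.Quotient.mk J v := by
      rw [← hz, map_add, (Ideal.Quotient.eq_zero_iff_mem).mpr hu, zero_add]
    rw [this, hI, ← Ideal.map_pow]
    exact Ideal.mem_map_of_mem _ hv
  have : Ideal.Quotient.mk J z = 0 := by
    have : Ideal.Quotient.mk J z ∈ (⊥ : Ideal (R ⧸ J)) := by
      rw [← hKrull]
      exact Submodule.mem_iInf _ |>.mpr hmem
    simpa using this
  exact (Ideal.Quotient.eq_zero_iff_mem).mp this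



lemma my_syz {x y : R} (hm : maximalIdeal R = Ideal.span {x, y})
    (hchain : ∃ p : Ideal R, p.IsPrime ∧ p ≠ ⊥ ∧ p < maximalIdeal R)
    (hy0 : y ≠ 0) :
    ∀ α β : R, α * x + β * y = 0 → ∃ δ : R, α = δ * y ∧ β = -(δ * x) := by
  intro α β h
  have hm' : maximalIdeal R = Ideal.span {y, x} := by rw [hm, Set.pair_comm]
  have hαy : α ∈ Ideal.span {y} := by
    apply my_colon hm' hchain α (-β)
    linear_combination h
  obtain ⟨δ, hδ⟩ := Ideal.mem_span_singleton'.mp hαy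
  refine ⟨δ, hδ.symm, ?_⟩
  have : y * (δ * x + β) = 0 := by
    rw [← hδ] at h
    linear_combination h
  rcases mul_eq_zero.mp this with h1 | h1
  · exact absurd h1 hy0
  · linear_combination h1

lemma my_gcolon {x y : R} (hm : maximalIdeal R = Ideal.span {x, y})
    (hchain : ∃ p : Ideal R, p.IsPrime ∧ p ≠ ⊥ ∧ p < maximalIdeal R)
    (hx0 : x ≠ 0) (hy0 : y ≠ 0) (g : R) :
    ∀ z : R, z * x ∈ Ideal.span {g} → z * y ∈ Ideal.span {g} → z ∈ Ideal.span {g} := by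
  intro z hzx hzy
  by_cases hz0 : z = 0
  · rw [hz0]; exact Ideal.zero_mem _
  obtain ⟨p₁, hp₁⟩ := Ideal.mem_span_singleton'.mp hzx
  obtain ⟨q₁, hq₁⟩ := Ideal.mem_span_singleton'.mp hzy
  have hzz : z * (q₁ * x - p₁ * y) = 0 := by linear_combination -q₁ * hp₁ + p₁ * hq₁
  have hxy0 : q₁ * x + (-p₁) * y = 0 := by
    rcases mul_eq_zero.mp hzz with h1 | h1
    · exact absurd h1 hz0
    · linear_combination h1
  obtain ⟨δ, hδ1, hδ2⟩ := my_syz hm hchain hy0 q₁ (-p₁) hxy0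
  have hp1 : p₁ = δ * x := by linear_combination -hδ2
  have : x * (z - g * δ) = 0 := by
    rw [hp1] at hp₁
    linear_combination -hp₁
  rcases mul_eq_zero.mp this with h1 | h1
  · exact absurd h1 hx0
  · rw [Ideal.mem_span_singleton']
    exact ⟨δ, by linear_combination -h1⟩

lemma my_gcolon_pow {x y : R} (hm : maximalIdeal R = Ideal.span {x, y})
    (hchain : ∃ p : Ideal R, p.IsPrime ∧ p ≠ ⊥ ∧ p < maximalIdeal R)
    (hx0 : x ≠ 0) (hy0 : y ≠ 0) (g : R) :
    ∀ (n k : ℕ) (z : R), z * x ^ n ∈ Ideal.span {g} → z * y ^ k ∈ Ideal.span {g} →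
      z ∈ Ideal.span {g} := by
  have key : ∀ N : ℕ, ∀ n k : ℕ, n + k ≤ N → ∀ z : R,
      z * x ^ n ∈ Ideal.span {g} → z * y ^ k ∈ Ideal.span {g} → z ∈ Ideal.span {g} := by
    intro N
    induction N with
    | zero =>
      intro n k hnk z hzx hzy
      obtain ⟨hn, hk⟩ := Nat.add_eq_zero.mp (Nat.le_zero.mp hnk)
      rw [hn, pow_zero, mul_one] at hzx
      exact hzx
    | succ N ihN =>
      intro n k hnk z hzx hzy
      rcases Nat.eq_zero_or_pos n with hn | hn
      · rw [hn, pow_zero, mul_one] at hzx; exact hzx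
      rcases Nat.eq_zero_or_pos k with hk | hk
      · rw [hk, pow_zero, mul_one] at hzy; exact hzy
      obtain ⟨n', rfl⟩ := Nat.exists_eq_add_of_le hn
      obtain ⟨k', rfl⟩ := Nat.exists_eq_add_of_le hk
      -- z * x ∈ (g)
      have hzx' : z * x ∈ Ideal.span {g} := by
        apply ihN n' (1 + k') (by omega) (z * x)
        · rw [show z * x * x ^ n' = z * x ^ (1 + n') from by ring]; exact hzx
        · rw [show z * x * y ^ (1 + k') = (z * y ^ (1 + k')) * x from by ring]
          exact Ideal.mul_mem_right x _ hzy
      have hzy' : z * y ∈ Ideal.span {g} := by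
        apply ihN (1 + n') k' (by omega) (z * y)
        · rw [show z * y * x ^ (1 + n') = (z * x ^ (1 + n')) * y from by ring]
          exact Ideal.mul_mem_right y _ hzx
        · rw [show z * y * y ^ k' = z * y ^ (1 + k') from by ring]; exact hzy
      exact my_gcolon hm hchain hx0 hy0 g z hzx' hzy'
  intro n k z hzx hzy
  exact key (n + k) n k le_rfl z hzx hzy

lemma my_koszul {x y a b : R} (hm : maximalIdeal R = Ideal.span {x, y})
    (hchain : ∃ p : Ideal R, p.IsPrime ∧ p ≠ ⊥ ∧ p < maximalIdeal R)
    (hx0 : x ≠ 0) (hy0 : y ≠ 0)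
    (hQ : (Ideal.span {a, b} : Ideal R).radical = maximalIdeal R) :
    ∀ α β : R, α * a + β * b = 0 → ∃ w : R, α = w * b ∧ β = -(w * a) := by
  have hxm : x ∈ maximalIdeal R := hm ▸ Ideal.subset_span (by simp)
  have hym : y ∈ maximalIdeal R := hm ▸ Ideal.subset_span (by simp)
  have ham : a ∈ maximalIdeal R := by
    rw [← hQ]; exact Ideal.le_radical (Ideal.subset_span (by simp))
  obtain ⟨n, hxn⟩ : ∃ n : ℕ, x ^ n ∈ Ideal.span {a, b} := by
    have : x ∈ (Ideal.span {a, b} : Ideal R).radical := hQ ▸ hxm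
    exact this
  obtain ⟨k, hyk⟩ : ∃ k : ℕ, y ^ k ∈ Ideal.span {a, b} := by
    have : y ∈ (Ideal.span {a, b} : Ideal R).radical := hQ ▸ hym
    exact this
  -- b ≠ 0
  have hb0 : b ≠ 0 := by
    intro hb
    obtain ⟨p, hp, hp0, hpm⟩ := hchain
    apply my_pit ham (N := n + k) ?_ hp hp0 hpm
    have hab : (Ideal.span {a, b} : Ideal R) ≤ Ideal.span {a} := by
      rw [hb]
      apply Ideal.span_le.mpr
      intro r hr
      rcases hr with h | h
      · exact h ▸ Ideal.mem_span_singleton_self a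
      · simp only [Set.mem_singleton_iff] at h
        rw [h]; exact Ideal.zero_mem _
    calc maximalIdeal R ^ (n + k) = Ideal.span {x, y} ^ (n + k) := by rw [hm]
      _ ≤ Ideal.span {x ^ n} ⊔ Ideal.span {y ^ k} := my_pow_pair n k
      _ ≤ Ideal.span {a} := by
          apply sup_le
          · exact Ideal.span_le.mpr (by simpa using hab hxn)
          · exact Ideal.span_le.mpr (by simpa using hab hyk)
  intro α β h
  obtain ⟨p₁, q₁, hpq₁⟩ := Ideal.mem_span_pair.mp hxn
  obtain ⟨p₂, q₂, hpq₂⟩ := Ideal.mem_span_pair.mp hyk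
  have h1 : α * x ^ n = (q₁ * α - p₁ * β) * b := by linear_combination -α * hpq₁ + p₁ * h
  have h2 : α * y ^ k = (q₂ * α - p₂ * β) * b := by linear_combination -α * hpq₂ + p₂ * h
  have hαb : α ∈ Ideal.span {b} :=
    my_gcolon_pow hm hchain hx0 hy0 b n k α
      (Ideal.mem_span_singleton'.mpr ⟨_, h1.symm⟩)
      (Ideal.mem_span_singleton'.mpr ⟨_, h2.symm⟩)
  obtain ⟨w, hw⟩ := Ideal.mem_span_singleton'.mp hαb
  refine ⟨w, hw.symm, ?_⟩
  have : b * (w * a + β) = 0 := by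
    rw [← hw] at h
    linear_combination h
  rcases mul_eq_zero.mp this with h1 | h1
  · exact absurd h1 hb0
  · linear_combination h1


end RLR

theorem stmt_4 (R : Type*) [CommRing R] [IsDomain R] [IsNoetherianRing R] [IsLocalRing R]
    (hdim : ringKrullDim R = 2) (x y : R)
    (hm : maximalIdeal R = Ideal.span {x, y})
    (f₁₁ f₁₂ f₂₁ f₂₂ : R)
    (h11 : f₁₁ ∈ maximalIdeal R ^ 2) (h12 : f₁₂ ∈ maximalIdeal R ^ 2)
    (h21 : f₂₁ ∈ maximalIdeal R ^ 2) (h22 : f₂₂ ∈ maximalIdeal R ^ 2)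
    (a b c : R) (ha : a = f₁₁ * x + f₁₂ * y) (hb : b = f₂₁ * x + f₂₂ * y)
    (hc : c = f₁₁ * f₂₂ - f₁₂ * f₂₁)
    (hQ : (Ideal.span {a, b} : Ideal R).radical = maximalIdeal R) :
    Submodule.colon (Ideal.span {a, b} : Ideal R) (maximalIdeal R)
      = Ideal.span {a, b} ⊔ Ideal.span {c} := by
  have hxm : x ∈ maximalIdeal R := hm ▸ Ideal.subset_span (by simp)
  have hym : y ∈ maximalIdeal R := hm ▸ Ideal.subset_span (by simp)
  -- extract a chain ⊥ < p < m from dim = 2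
  have hchain : ∃ p : Ideal R, p.IsPrime ∧ p ≠ ⊥ ∧ p < maximalIdeal R := by
    by_contra hcon
    have hlen : ∀ q : LTSeries (PrimeSpectrum R), q.length ≤ 1 := by
      intro q
      by_contra hq
      push_neg at hq
      have h2q : 2 ≤ q.length := hq
      have h01 : q ⟨0, by omega⟩ < q ⟨1, by omega⟩ := q.strictMono (by simp [Fin.lt_def])
      have h12 : q ⟨1, by omega⟩ < q ⟨2, by omega⟩ := q.strictMono (by simp [Fin.lt_def])
      refine hcon ⟨(q ⟨1, by omega⟩).asIdeal, (q ⟨1, by omega⟩).2, ?_, ?_⟩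
      · exact ne_bot_of_gt ((PrimeSpectrum.asIdeal_lt_asIdeal _ _).mpr h01)
      · calc (q ⟨1, by omega⟩).asIdeal
            < (q ⟨2, by omega⟩).asIdeal := (PrimeSpectrum.asIdeal_lt_asIdeal _ _).mpr h12
          _ ≤ maximalIdeal R := le_maximalIdeal (q ⟨2, by omega⟩).2.ne_top
    have hle1 : ringKrullDim R ≤ (1 : ℕ) := by
      show Order.krullDim (PrimeSpectrum R) ≤ (1 : ℕ)
      rw [Order.krullDim]
      exact iSup_le fun q => by exact_mod_cast hlen q
    rw [hdim] at hle1
    norm_num at hle1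
  have hx0 : x ≠ 0 := by
    intro h0
    apply my_not_principal hchain y
    rw [hm, h0, Ideal.span_insert]
    simp [Ideal.span_le]
  have hy0 : y ≠ 0 := by
    intro h0
    apply my_not_principal hchain x
    rw [hm, h0, Set.pair_comm, Ideal.span_insert]
    simp [Ideal.span_le]
  have hcx : c * x = f₂₂ * a - f₁₂ * b := by rw [ha, hb, hc]; ring
  have hcy : c * y = f₁₁ * b - f₂₁ * a := by rw [ha, hb, hc]; ring
  apply le_antisymm
  · -- Q : m ≤ Q + (c)
    intro r hr
    have hrx : r * x ∈ Ideal.span {a, b} := by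
      have := Submodule.mem_colon.mp hr x hxm
      rwa [smul_eq_mul] at this
    have hry : r * y ∈ Ideal.span {a, b} := by
      have := Submodule.mem_colon.mp hr y hym
      rwa [smul_eq_mul] at this
    obtain ⟨u, v, hu⟩ := Ideal.mem_span_pair.mp hrx
    obtain ⟨s, t, hs⟩ := Ideal.mem_span_pair.mp hry
    -- Koszul syzygy
    obtain ⟨w, hw1, hw2⟩ := my_koszul hm hchain hx0 hy0 hQ (u * y - s * x) (v * y - t * x)
      (by linear_combination y * hu - x * hs)
    -- syzygies of (x, y)
    obtain ⟨δ, hδ1, hδ2⟩ := my_syz hm hchain hy0 (r - (u * f₁₁ + v * f₂₁))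
      (-(u * f₁₂ + v * f₂₂)) (by linear_combination -hu + u * ha + v * hb)
    have hδ2x : u * f₁₂ + v * f₂₂ = δ * x := by linear_combination -hδ2
    obtain ⟨δ', hδ'1, hδ'2⟩ := my_syz hm hchain hy0 (s * f₁₁ + t * f₂₁)
      ((s * f₁₂ + t * f₂₂) - r) (by linear_combination hs - s * ha - t * hb)
    -- the key representation r = δ' x + δ y + w c
    have hy5 : y * (r - (δ' * x + δ * y + w * c)) = 0 := by
      linear_combination y * hδ1 + f₁₁ * hw1 + f₂₁ * hw2 + x * hδ'1 + w * f₁₁ * hb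
        - w * f₂₁ * ha - w * y * hc
    have hstep5 : r = δ' * x + δ * y + w * c := by
      rcases mul_eq_zero.mp hy5 with h1 | h1
      · exact absurd h1 hy0
      · linear_combination h1
    -- determinant identities
    have hPx : (f₂₂ * δ' - f₂₁ * δ) * x = c * (u - f₂₂ * w) := by
      linear_combination (-u) * hc + f₂₂ * hδ1 + f₂₁ * hδ2x - f₂₂ * hstep5
    have hPy : (f₂₂ * δ' - f₂₁ * δ) * y = c * (s + f₂₁ * w) := by
      linear_combination (-s) * hc - f₂₂ * hδ'1 + f₂₁ * hδ'2 + f₂₁ * hstep5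
    have hLx : (f₁₁ * δ - f₁₂ * δ') * x = c * (v + f₁₂ * w) := by
      linear_combination (-v) * hc - f₁₁ * hδ2x - f₁₂ * hδ1 + f₁₂ * hstep5
    have hLy : (f₁₁ * δ - f₁₂ * δ') * y = c * (t - f₁₁ * w) := by
      linear_combination (-t) * hc - f₁₁ * hδ'2 + f₁₂ * hδ'1 - f₁₁ * hstep5
    -- c ≠ 0
    have hc0 : c ≠ 0 := by
      intro h0
      obtain ⟨w₁, hw₁b, hw₁a⟩ := my_koszul hm hchain hx0 hy0 hQ f₂₂ (-f₁₂)
        (by linear_combination -hcx + x * h0)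
      obtain ⟨w₂, hw₂b, hw₂a⟩ := my_koszul hm hchain hx0 hy0 hQ (-f₂₁) f₁₁
        (by linear_combination -hcy + y * h0)
      have hf12 : f₁₂ = w₁ * a := by linear_combination -hw₁a
      have hunit : IsUnit (1 + w₂ * x - w₁ * y) := by
        by_contra hne
        have hε : (1 + w₂ * x - w₁ * y) ∈ maximalIdeal R :=
          (IsLocalRing.mem_maximalIdeal _).mpr hne
        have h1m : (1 : R) ∈ maximalIdeal R := by
          have := Submodule.add_mem _ (Submodule.sub_mem _ hε
            (Ideal.mul_mem_left _ w₂ hxm)) (Ideal.mul_mem_left _ w₁ hym)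
          rwa [show 1 + w₂ * x - w₁ * y - w₂ * x + w₁ * y = 1 from by ring] at this
        exact (maximalIdeal.isMaximal R).ne_top
          (Ideal.eq_top_of_isUnit_mem _ h1m isUnit_one)
      have ha0 : a = 0 := by
        have : a * (1 + w₂ * x - w₁ * y) = 0 := by
          linear_combination ha + x * hw₂a + y * hf12
        exact (hunit.mul_left_eq_zero).mp this
      have hb0 : b = 0 := by
        have hf21 : f₂₁ = -(w₂ * b) := by linear_combination -hw₂b
        have : b * (1 + w₂ * x - w₁ * y) = 0 := by
          linear_combination hb + x * hf21 + y * hw₁b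
        exact (hunit.mul_left_eq_zero).mp this
      have hxrad : x ∈ (Ideal.span {a, b} : Ideal R).radical := hQ ▸ hxm
      obtain ⟨n, hxn⟩ := hxrad
      rw [ha0, hb0] at hxn
      have : x ^ n = 0 := by
        rw [Set.pair_eq_singleton, Ideal.span_singleton_eq_bot.mpr rfl] at hxn
        exact Ideal.mem_bot.mp hxn
      rcases Nat.eq_zero_or_pos n with h | h
      · rw [h, pow_zero] at this; exact one_ne_zero this
      · exact hx0 (pow_eq_zero_iff (Nat.pos_iff_ne_zero.mp h) |>.mp this)
    -- P, L ∈ (c)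
    have hPc : (f₂₂ * δ' - f₂₁ * δ) ∈ Ideal.span {c} := by
      apply my_gcolon hm hchain hx0 hy0 c _
      · exact Ideal.mem_span_singleton'.mpr ⟨u - f₂₂ * w, by linear_combination -hPx⟩
      · exact Ideal.mem_span_singleton'.mpr ⟨s + f₂₁ * w, by linear_combination -hPy⟩
    have hLc : (f₁₁ * δ - f₁₂ * δ') ∈ Ideal.span {c} := by
      apply my_gcolon hm hchain hx0 hy0 c _
      · exact Ideal.mem_span_singleton'.mpr ⟨v + f₁₂ * w, by linear_combination -hLx⟩
      · exact Ideal.mem_span_singleton'.mpr ⟨t - f₁₁ * w, by linear_combination -hLy⟩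
    obtain ⟨P', hP'⟩ := Ideal.mem_span_singleton'.mp hPc
    obtain ⟨L', hL'⟩ := Ideal.mem_span_singleton'.mp hLc
    -- conclude
    have hkey : c * (δ' * x + δ * y) = (P' * a + L' * b) * c := by
      linear_combination (-a) * hP' + (-b) * hL' + (δ' * x + δ * y) * hc
        + (-(f₂₂ * δ') + f₂₁ * δ) * ha + (-(f₁₁ * δ) + f₁₂ * δ') * hb
    have hccancel : c * (r - w * c) = c * (P' * a + L' * b) := by
      linear_combination c * hstep5 + hkey
    have heq : r - w * c = P' * a + L' * b := mul_left_cancel₀ hc0 hccancel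
    apply Submodule.mem_sup.mpr
    refine ⟨P' * a + L' * b, Ideal.mem_span_pair.mpr ⟨P', L', rfl⟩,
      w * c, Ideal.mem_span_singleton'.mpr ⟨w, rfl⟩, by linear_combination -heq⟩
  · -- Q + (c) ≤ Q : m
    apply sup_le
    · intro r hr
      apply Submodule.mem_colon.mpr
      intro v hv
      rw [smul_eq_mul]
      exact Ideal.mul_mem_right v _ hr
    · apply Ideal.span_le.mpr
      intro ρ hρ
      simp only [SetLike.mem_coe, Set.mem_singleton_iff] at hρ
      rw [hρ]
      apply Submodule.mem_colon.mpr
      intro v hv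
      rw [smul_eq_mul]
      rw [hm] at hv
      obtain ⟨u, v', huv⟩ := Ideal.mem_span_pair.mp hv
      exact Ideal.mem_span_pair.mpr ⟨u * f₂₂ - v' * f₂₁, v' * f₁₁ - u * f₁₂,
        by linear_combination -u * hcx - v' * hcy + c * huv⟩
end Artinian
end

section
/- Let S = k[[x, y, z]] be a formal power series ring over a field k, with maximal ideal n = (x, y, z). Let f ∈ n^2 \ n^3 and R = S/(f) with maximal ideal m. Suppose a, b ∈ m satisfy m^2 = (a, b)m. Then for every integer ℓ > 0, setting I = m^ℓ and Q = (a^ℓ, b^ℓ), one has I^2 = QI. -/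
open IsLocalRing

lemma key_pow {R : Type*} [CommRing R] (a b : R) (ℓ : ℕ) (hℓ : 0 < ℓ) :
    Ideal.span {a, b} ^ (2 * ℓ - 1) ≤
      Ideal.span {a ^ ℓ, b ^ ℓ} * Ideal.span {a, b} ^ (ℓ - 1) := by
  have hspan : (Ideal.span {a, b} : Ideal R) = Ideal.span {a} ⊔ Ideal.span {b} := by
    rw [Ideal.span_insert]
  rw [hspan, ← Ideal.add_eq_sup, add_pow, Ideal.sum_eq_sup]
  apply Finset.sup_le
  intro i hi
  simp only [Finset.mem_range] at hi
  have hsum : i + (2 * ℓ - 1 - i) = 2 * ℓ - 1 := by omega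
  refine le_trans Ideal.mul_le_left ?_
  set j := 2 * ℓ - 1 - i with hj
  by_cases hiℓ : ℓ ≤ i
  · -- a^i factor contains a^ℓ
    have h1 : (Ideal.span {a} : Ideal R) ^ i = Ideal.span {a ^ ℓ} * Ideal.span {a} ^ (i - ℓ) := by
      rw [Ideal.span_singleton_pow, Ideal.span_singleton_pow,
        Ideal.span_singleton_mul_span_singleton, ← pow_add,
        show ℓ + (i - ℓ) = i from by omega]
    rw [h1, mul_assoc]
    refine Ideal.mul_mono ?_ ?_
    · exact Ideal.span_mono (by simp)
    · calc Ideal.span {a} ^ (i - ℓ) * Ideal.span {b} ^ j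
          ≤ Ideal.span {a, b} ^ (i - ℓ) * Ideal.span {a, b} ^ j :=
            Ideal.mul_mono (Ideal.pow_right_mono (Ideal.span_mono (by simp)) _)
              (Ideal.pow_right_mono (Ideal.span_mono (by simp)) _)
        _ = Ideal.span {a, b} ^ (ℓ - 1) := by rw [← pow_add]; congr 1; omega
        _ = (Ideal.span {a} + Ideal.span {b}) ^ (ℓ - 1) := by rw [hspan, Ideal.add_eq_sup]
  · -- then j ≥ ℓ, b^j factor contains b^ℓ
    have hjℓ : ℓ ≤ j := by omega
    have h1 : (Ideal.span {b} : Ideal R) ^ j = Ideal.span {b ^ ℓ} * Ideal.span {b} ^ (j - ℓ) := by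
      rw [Ideal.span_singleton_pow, Ideal.span_singleton_pow,
        Ideal.span_singleton_mul_span_singleton, ← pow_add,
        show ℓ + (j - ℓ) = j from by omega]
    rw [h1, show (Ideal.span {a} : Ideal R) ^ i * (Ideal.span {b ^ ℓ} * Ideal.span {b} ^ (j - ℓ)) =
      Ideal.span {b ^ ℓ} * (Ideal.span {a} ^ i * Ideal.span {b} ^ (j - ℓ)) from by ring]
    refine Ideal.mul_mono ?_ ?_
    · exact Ideal.span_mono (by simp)
    · calc Ideal.span {a} ^ i * Ideal.span {b} ^ (j - ℓ)
          ≤ Ideal.span {a, b} ^ i * Ideal.span {a, b} ^ (j - ℓ) :=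
            Ideal.mul_mono (Ideal.pow_right_mono (Ideal.span_mono (by simp)) _)
              (Ideal.pow_right_mono (Ideal.span_mono (by simp)) _)
        _ = Ideal.span {a, b} ^ (ℓ - 1) := by rw [← pow_add]; congr 1; omega
        _ = (Ideal.span {a} + Ideal.span {b}) ^ (ℓ - 1) := by rw [hspan, Ideal.add_eq_sup]

theorem stmt_6 (k : Type*) [Field k]
    (f : MvPowerSeries (Fin 3) k)
    (hf2 : f ∈ maximalIdeal (MvPowerSeries (Fin 3) k) ^ 2)
    (hf3 : f ∉ maximalIdeal (MvPowerSeries (Fin 3) k) ^ 3)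
    (R : Type*) [CommRing R] (π : MvPowerSeries (Fin 3) k →+* R)
    (hπ : Function.Surjective π)
    (hker : RingHom.ker π = Ideal.span {f})
    (m : Ideal R)
    (hmR : m = (maximalIdeal (MvPowerSeries (Fin 3) k)).map π)
    (a b : R) (ha : a ∈ m) (hb : b ∈ m)
    (hab : m ^ 2 = Ideal.span {a, b} * m)
    (ℓ : ℕ) (hℓ : 0 < ℓ) :
    (m ^ ℓ) ^ 2 = Ideal.span {a ^ ℓ, b ^ ℓ} * m ^ ℓ := by
  set Q : Ideal R := Ideal.span {a, b} with hQ
  set P : Ideal R := Ideal.span {a ^ ℓ, b ^ ℓ} with hP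
  -- m^(n+1) = Q^n * m for all n
  have hstep : ∀ n : ℕ, m ^ (n + 1) = Q ^ n * m := by
    intro n
    induction n with
    | zero => simp
    | succ n ih =>
      calc m ^ (n + 2) = m ^ (n + 1) * m := by ring
        _ = Q ^ n * m * m := by rw [ih]
        _ = Q ^ n * m ^ 2 := by ring
        _ = Q ^ n * (Q * m) := by rw [hab]
        _ = Q ^ (n + 1) * m := by ring
  -- Q^(2ℓ-1) = P * Q^(ℓ-1)
  have hPQ : P ≤ Q ^ ℓ := by
    rw [hP]
    apply Ideal.span_le.2
    intro x hx
    rcases hx with h | h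
    · subst h
      exact Ideal.pow_mem_pow (Ideal.subset_span (by simp)) ℓ
    · simp only [Set.mem_singleton_iff] at h
      subst h
      exact Ideal.pow_mem_pow (Ideal.subset_span (by simp)) ℓ
  have hQpow : Q ^ (2 * ℓ - 1) = P * Q ^ (ℓ - 1) := by
    refine le_antisymm (key_pow a b ℓ hℓ) ?_
    calc P * Q ^ (ℓ - 1) ≤ Q ^ ℓ * Q ^ (ℓ - 1) := Ideal.mul_mono hPQ le_rfl
      _ = Q ^ (2 * ℓ - 1) := by rw [← pow_add]; congr 1; omega
  calc (m ^ ℓ) ^ 2 = m ^ ((2 * ℓ - 1) + 1) := by rw [← pow_mul]; congr 1; omega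
    _ = Q ^ (2 * ℓ - 1) * m := hstep _
    _ = P * Q ^ (ℓ - 1) * m := by rw [hQpow]
    _ = P * (Q ^ (ℓ - 1) * m) := by ring
    _ = P * m ^ ((ℓ - 1) + 1) := by rw [hstep]
    _ = P * m ^ ℓ := by rw [show ℓ - 1 + 1 = ℓ from by omega]
end

section
/- Let (R, m) be a Gorenstein local ring of dimension 2 and I an m-primary ideal containing a parameter ideal Q = (a, b) such that I^2 = QI. Then for all n ≥ 0, Q^n ∩ (Q^{n+1} : I) = Q^n (Q : I). -/
open IsLocalRing

/-- Division by powers: from `u` NZD and `(u):v ⊆ (u)`, get `(u^i) : v^j ⊆ (u^i)`. -/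
lemma colon_pow_aux {R : Type*} [CommRing R] {u v : R}
    (hu : u ∈ nonZeroDivisors R)
    (huv : ∀ r : R, v * r ∈ Ideal.span {u} → r ∈ Ideal.span {u}) :
    ∀ i j (r : R), v ^ j * r ∈ Ideal.span {u ^ i} → r ∈ Ideal.span {u ^ i} := by
  have base : ∀ j (r : R), v ^ j * r ∈ Ideal.span {u} → r ∈ Ideal.span {u} := by
    intro j
    induction j with
    | zero => intro r h; simpa using h
    | succ j ih =>
      intro r h
      have h' : v ^ j * (v * r) ∈ Ideal.span {u} := by
        rw [show v ^ j * (v * r) = v ^ (j + 1) * r by ring]; exact h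
      exact huv r (ih _ h')
  intro i
  induction i with
  | zero => intro j r _; simp [Ideal.span_singleton_one]
  | succ i ih =>
    intro j r h
    obtain ⟨d, hd⟩ := Ideal.mem_span_singleton'.mp h
    have h1 : v ^ j * r ∈ Ideal.span {u} := by
      rw [← hd]
      exact Ideal.mem_span_singleton'.mpr ⟨d * u ^ i, by ring⟩
    obtain ⟨r', hr'⟩ := Ideal.mem_span_singleton'.mp (base j r h1)
    have h2 : (v ^ j * r' - d * u ^ i) * u = 0 := by
      have : v ^ j * (r' * u) = d * u ^ (i + 1) := by rw [hr']; exact hd.symm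
      rw [sub_mul]
      rw [show v ^ j * r' * u = v ^ j * (r' * u) by ring, this]
      ring
    have h3 : v ^ j * r' = d * u ^ i :=
      sub_eq_zero.mp (mem_nonZeroDivisors_iff_right.mp hu _ h2)
    obtain ⟨e, he⟩ := Ideal.mem_span_singleton'.mp
      (ih j r' (Ideal.mem_span_singleton'.mpr ⟨d, h3.symm⟩))
    exact Ideal.mem_span_singleton'.mpr ⟨e, by rw [← hr', ← he]; ring⟩

/-- Any proper "colon" ideal is contained in a prime colon ideal (associated prime). -/
lemma exists_prime_colon {R : Type*} [CommRing R] [IsNoetherianRing R]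
    (A : Ideal R) (c : R) (hc : c ∉ A) :
    ∃ x : R, x ∉ A ∧ A.colon (Ideal.span {c}) ≤ A.colon (Ideal.span {x}) ∧
      (A.colon (Ideal.span {x})).IsPrime := by
  set S : Set (Ideal R) :=
    {B | ∃ y, y ∉ A ∧ A.colon (Ideal.span {c}) ≤ B ∧ B = A.colon (Ideal.span {y})} with hS
  have hSne : S.Nonempty := ⟨A.colon (Ideal.span {c}), c, hc, le_rfl, rfl⟩
  obtain ⟨P, hPS, hPmax⟩ :=
    (set_has_maximal_iff_noetherian.mpr (inferInstance : IsNoetherian R R)) S hSne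
  obtain ⟨x, hx, hcx, rfl⟩ := hPS
  refine ⟨x, hx, hcx, ?_⟩
  constructor
  · intro htop
    exact hx (by simpa using (htop ▸ Submodule.mem_top : (1:R) ∈ A.colon (Ideal.span {x})))
  · intro s t hst
    by_cases hs : s ∈ A.colon (Ideal.span {x})
    · exact Or.inl hs
    right
    have hsx : s * x ∉ A := by
      intro h; exact hs (Ideal.mem_colon_span_singleton.mpr h)
    have hle : A.colon (Ideal.span {x}) ≤ A.colon (Ideal.span {s * x}) := by
      intro r hr
      rw [Ideal.mem_colon_span_singleton] at hr ⊢
      rw [show r * (s * x) = s * (r * x) by ring]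
      exact Ideal.mul_mem_left _ _ hr
    have hmem : A.colon (Ideal.span {s * x}) ∈ S :=
      ⟨s * x, hsx, le_trans hcx hle, rfl⟩
    have heq : A.colon (Ideal.span {s * x}) = A.colon (Ideal.span {x}) := by
      by_contra hne
      exact hPmax _ hmem (lt_of_le_of_ne hle (Ne.symm hne))
    rw [← heq, Ideal.mem_colon_span_singleton]
    rw [show t * (s * x) = (s * t) * x by ring]
    exact Ideal.mem_colon_span_singleton.mp hst

open IsLocalRing

lemma reg_transfer {R : Type*} [CommRing R] [IsNoetherianRing R] [IsLocalRing R]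
    {u v a b : R} (hum : u ∈ maximalIdeal R) (hvm : v ∈ maximalIdeal R)
    (hu : u ∈ nonZeroDivisors R)
    (huv : ∀ r : R, v * r ∈ Ideal.span {u} → r ∈ Ideal.span {u})
    (hQ : (Ideal.span {a, b} : Ideal R).radical = maximalIdeal R) :
    a ∈ nonZeroDivisors R ∧ (∀ r : R, b * r ∈ Ideal.span {a} → r ∈ Ideal.span {a}) := by
  have haQ : a ∈ Ideal.span ({a, b} : Set R) := Ideal.subset_span (Set.mem_insert _ _)
  have hbQ : b ∈ Ideal.span ({a, b} : Set R) :=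
    Ideal.subset_span (Set.mem_insert_of_mem _ rfl)
  have hbm : b ∈ maximalIdeal R := hQ ▸ Ideal.le_radical hbQ
  -- Step A : a is a nonzerodivisor
  have ha : a ∈ nonZeroDivisors R := by
    rw [mem_nonZeroDivisors_iff_right]
    intro x hxa
    by_contra hx0
    have hxbot : x ∉ (⊥ : Ideal R) := by simpa using hx0
    obtain ⟨x', hx', hle, hP⟩ := exists_prime_colon (⊥ : Ideal R) x hxbot
    set P : Ideal R := (⊥ : Ideal R).colon (Ideal.span {x'}) with hPdef
    have haP : a ∈ P := hle (Ideal.mem_colon_span_singleton.mpr (by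
      simpa using (by rw [mul_comm]; exact hxa : a * x = 0)))
    -- x' is killed by P
    have hkill : ∀ p ∈ P, p * x' = 0 := by
      intro p hp
      simpa using Ideal.mem_colon_span_singleton.mp hp
    by_cases hbP : b ∈ P
    · -- then P ⊇ (a,b), hence P ⊇ m ∋ u, and u kills x'
      have hQP : Ideal.span ({a, b} : Set R) ≤ P := by
        rw [Ideal.span_le]; rintro z (rfl | rfl); exacts [haP, hbP]
      have hmP : maximalIdeal R ≤ P := hQ ▸ hP.radical_le_iff.mpr hQP
      have h2 : x' * u = 0 := by rw [mul_comm]; exact hkill u (hmP hum)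
      exact hx' (by simpa using mem_nonZeroDivisors_iff_right.mp hu x' h2)
    · -- Ischebeck-style contradiction
      set J : Ideal R := P ⊔ Ideal.span {b} with hJdef
      have hQJ : Ideal.span ({a, b} : Set R) ≤ J := by
        rw [Ideal.span_le]
        rintro z (rfl | rfl)
        · exact Submodule.mem_sup_left haP
        · exact Submodule.mem_sup_right (Ideal.subset_span rfl)
      have hmJ : maximalIdeal R ≤ J.radical := hQ ▸ Ideal.radical_mono hQJ
      obtain ⟨K, hK⟩ := Ideal.exists_pow_le_of_le_radical_of_fg hmJ
        (IsNoetherian.noetherian _)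
      have hUJ : u ^ K ∈ J := hK (Ideal.pow_mem_pow hum K)
      have hVJ : v ^ K ∈ J := hK (Ideal.pow_mem_pow hvm K)
      obtain ⟨q₁, hq₁, w₁, hw₁, hUdec⟩ := Submodule.mem_sup.mp hUJ
      obtain ⟨c₁, hc₁⟩ := Ideal.mem_span_singleton'.mp hw₁
      obtain ⟨q₂, hq₂, w₂, hw₂, hVdec⟩ := Submodule.mem_sup.mp hVJ
      obtain ⟨c₂, hc₂⟩ := Ideal.mem_span_singleton'.mp hw₂
      set S : Ideal R := (⊥ : Ideal R).colon P with hSdef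
      have hx'S : x' ∈ S := by
        rw [Submodule.mem_colon]
        intro p hp
        simpa [smul_eq_mul, mul_comm] using hkill p hp
      have hUnzd : u ^ K ∈ nonZeroDivisors R := pow_mem hu K
      have hSsub : S ≤ (maximalIdeal R) • S := by
        intro z hz
        have hzkill : ∀ p ∈ P, z * p = 0 := by
          intro p hp
          simpa [smul_eq_mul, mul_comm] using (Submodule.mem_colon.mp hz p hp)
        -- key identity : v^K * (c₁ * z) = u^K * (c₂ * z)
        have hkey : v ^ K * (c₁ * z) = u ^ K * (c₂ * z) := by
          rw [← hUdec, ← hVdec, ← hc₁, ← hc₂]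
          have e1 : z * q₁ = 0 := hzkill _ hq₁
          have e2 : z * q₂ = 0 := hzkill _ hq₂
          calc (q₂ + c₂ * b) * (c₁ * z) = c₁ * (z * q₂) + c₁ * c₂ * b * z := by ring
            _ = c₂ * (z * q₁) + c₁ * c₂ * b * z := by rw [e1, e2]; ring
            _ = (q₁ + c₁ * b) * (c₂ * z) := by ring
        have hc₁z : c₁ * z ∈ Ideal.span {u ^ K} :=
          colon_pow_aux hu huv K K _ (Ideal.mem_span_singleton'.mpr ⟨c₂ * z, by rw [mul_comm]; exact hkey.symm⟩)
        obtain ⟨r, hr⟩ := Ideal.mem_span_singleton'.mp hc₁z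
        have hrS : r ∈ S := by
          rw [Submodule.mem_colon]
          intro p hp
          have : (r * p) * u ^ K = 0 := by
            have : c₁ * z * p = 0 := by
              rw [show c₁ * z * p = c₁ * (z * p) by ring, hzkill p hp, mul_zero]
            calc (r * p) * u ^ K = (r * u ^ K) * p := by ring
              _ = c₁ * z * p := by rw [hr]
              _ = 0 := this
          simpa [smul_eq_mul] using mem_nonZeroDivisors_iff_right.mp hUnzd _ this
        have hzbr : z = b * r := by
          have h0 : (z - b * r) * u ^ K = 0 := by
            calc (z - b * r) * u ^ K = u ^ K * z - b * (r * u ^ K) := by ring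
              _ = (q₁ + c₁ * b) * z - b * (c₁ * z) := by rw [hr, ← hUdec, ← hc₁]
              _ = z * q₁ := by ring
              _ = 0 := hzkill _ hq₁
          exact sub_eq_zero.mp (mem_nonZeroDivisors_iff_right.mp hUnzd _ h0)
        rw [hzbr]
        exact Submodule.smul_mem_smul hbm hrS
      have hSbot : S = ⊥ :=
        Submodule.eq_bot_of_le_smul_of_le_jacobson_bot (maximalIdeal R) S
          (IsNoetherian.noetherian _) hSsub
          (IsLocalRing.maximalIdeal_le_jacobson _)
      rw [hSbot] at hx'S
      exact hx' hx'S
  -- Step B : (a) : m ⊆ (a)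
  have hma : ∀ z : R, (∀ t ∈ maximalIdeal R, z * t ∈ Ideal.span {a}) →
      z ∈ Ideal.span {a} := by
    intro z hz
    obtain ⟨s₁, hs₁⟩ := Ideal.mem_span_singleton'.mp (hz u hum)
    obtain ⟨s₂, hs₂⟩ := Ideal.mem_span_singleton'.mp (hz v hvm)
    have hvs₁ : v * s₁ ∈ Ideal.span {u} := by
      have h0 : (v * s₁ - u * s₂) * a = 0 := by
        calc (v * s₁ - u * s₂) * a = v * (s₁ * a) - u * (s₂ * a) := by ring
          _ = v * (z * u) - u * (z * v) := by rw [hs₁, hs₂]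
          _ = 0 := by ring
      have := sub_eq_zero.mp (mem_nonZeroDivisors_iff_right.mp ha _ h0)
      exact Ideal.mem_span_singleton'.mpr ⟨s₂, by rw [mul_comm]; exact this.symm⟩
    obtain ⟨t, ht⟩ := Ideal.mem_span_singleton'.mp (huv s₁ hvs₁)
    have h0 : (z - a * t) * u = 0 := by
      calc (z - a * t) * u = z * u - (t * u) * a := by ring
        _ = s₁ * a - (t * u) * a := by rw [hs₁]
        _ = (s₁ - t * u) * a := by ring
        _ = 0 := by rw [← ht]; ring
    have := sub_eq_zero.mp (mem_nonZeroDivisors_iff_right.mp hu _ h0)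
    exact Ideal.mem_span_singleton'.mpr ⟨t, by rw [this, mul_comm]⟩
  -- Step C : (a) : b ⊆ (a)
  refine ⟨ha, ?_⟩
  intro r hbr
  by_contra hr
  obtain ⟨x, hx, hle, hP⟩ := exists_prime_colon (Ideal.span {a}) r hr
  set P : Ideal R := (Ideal.span {a}).colon (Ideal.span {x}) with hPdef
  have haP : a ∈ P := Ideal.mem_colon_span_singleton.mpr
    (Ideal.mem_span_singleton'.mpr ⟨x, mul_comm x a⟩)
  have hbP : b ∈ P := hle (Ideal.mem_colon_span_singleton.mpr hbr)
  have hQP : Ideal.span ({a, b} : Set R) ≤ P := by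
    rw [Ideal.span_le]; rintro z (rfl | rfl); exacts [haP, hbP]
  have hmP : maximalIdeal R ≤ P := hQ ▸ hP.radical_le_iff.mpr hQP
  exact hx (hma x (fun t ht => by rw [mul_comm]; exact Ideal.mem_colon_span_singleton.mp (hmP ht)))

lemma mono_mem_pow {R : Type*} [CommRing R] (a b : R) {n i : ℕ} (h : i ≤ n) :
    a ^ i * b ^ (n - i) ∈ (Ideal.span {a, b} : Ideal R) ^ n := by
  have haQ : a ∈ Ideal.span ({a, b} : Set R) := Ideal.subset_span (Set.mem_insert _ _)
  have hbQ : b ∈ Ideal.span ({a, b} : Set R) :=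
    Ideal.subset_span (Set.mem_insert_of_mem _ rfl)
  have := Ideal.mul_mem_mul (Ideal.pow_mem_pow haQ i) (Ideal.pow_mem_pow hbQ (n - i))
  rwa [← pow_add, Nat.add_sub_cancel' h] at this

lemma repr_pow {R : Type*} [CommRing R] (a b : R) :
    ∀ (n : ℕ) (x : R), x ∈ (Ideal.span {a, b} : Ideal R) ^ n →
      ∃ c : ℕ → R, x = ∑ i ∈ Finset.range (n + 1), c i * (a ^ i * b ^ (n - i)) := by
  intro n
  induction n with
  | zero => intro x _; exact ⟨fun _ => x, by simp⟩
  | succ n ih =>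
    intro x hx
    rw [pow_succ] at hx
    refine Submodule.mul_induction_on hx ?_ ?_
    · intro m hm q hq
      obtain ⟨c, hc⟩ := ih m hm
      obtain ⟨α, β, hq'⟩ := Ideal.mem_span_pair.mp hq
      refine ⟨fun i => (if i ≤ n then β * c i else 0) +
        (if 1 ≤ i then α * c (i - 1) else 0), ?_⟩
      have hsplit : ∑ i ∈ Finset.range (n + 2),
          ((if i ≤ n then β * c i else 0) + (if 1 ≤ i then α * c (i - 1) else 0)) *
            (a ^ i * b ^ (n + 1 - i))
          = (∑ i ∈ Finset.range (n + 2),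
              (if i ≤ n then β * c i else 0) * (a ^ i * b ^ (n + 1 - i)))
            + ∑ i ∈ Finset.range (n + 2),
              (if 1 ≤ i then α * c (i - 1) else 0) * (a ^ i * b ^ (n + 1 - i)) := by
        rw [← Finset.sum_add_distrib]
        exact Finset.sum_congr rfl fun i _ => by ring
      have hS1 : ∑ i ∈ Finset.range (n + 2),
          (if i ≤ n then β * c i else 0) * (a ^ i * b ^ (n + 1 - i))
          = ∑ i ∈ Finset.range (n + 1), β * (c i * (a ^ i * b ^ (n + 1 - i))) := by
        rw [Finset.sum_range_succ, if_neg (by omega), zero_mul, add_zero]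
        exact Finset.sum_congr rfl fun i hi => by
          rw [if_pos (Nat.lt_succ_iff.mp (Finset.mem_range.mp hi))]; ring
      have hS2 : ∑ i ∈ Finset.range (n + 2),
          (if 1 ≤ i then α * c (i - 1) else 0) * (a ^ i * b ^ (n + 1 - i))
          = ∑ i ∈ Finset.range (n + 1), α * (c i * (a ^ (i + 1) * b ^ (n - i))) := by
        rw [Finset.sum_range_succ']
        simp only [if_neg (by omega : ¬ (1:ℕ) ≤ 0), zero_mul, add_zero]
        exact Finset.sum_congr rfl fun i hi => by
          rw [if_pos (by omega : 1 ≤ i + 1)]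
          have : n + 1 - (i + 1) = n - i := by omega
          rw [this]
          simp only [Nat.add_sub_cancel]
          ring
      rw [hsplit, hS1, hS2, hc, ← hq', Finset.sum_mul, ← Finset.sum_add_distrib]
      exact Finset.sum_congr rfl fun i hi => by
        have hi' : i ≤ n := Nat.lt_succ_iff.mp (Finset.mem_range.mp hi)
        have hnb : n + 1 - i = (n - i) + 1 := by omega
        rw [hnb]
        ring
    · rintro y z ⟨c, hc⟩ ⟨c', hc'⟩
      refine ⟨fun i => c i + c' i, ?_⟩
      rw [hc, hc', ← Finset.sum_add_distrib]
      exact Finset.sum_congr rfl fun i _ => by ring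

lemma quasi_reg {R : Type*} [CommRing R] {a b : R} (ha : a ∈ nonZeroDivisors R)
    (hab : ∀ r : R, b * r ∈ Ideal.span {a} → r ∈ Ideal.span {a}) :
    ∀ (n : ℕ) (c : ℕ → R),
      (∑ i ∈ Finset.range (n + 1), c i * (a ^ i * b ^ (n - i)))
        ∈ (Ideal.span {a, b} : Ideal R) ^ (n + 1) →
      ∀ i ≤ n, c i ∈ (Ideal.span {a, b} : Ideal R) := by
  have hbQ : b ∈ Ideal.span ({a, b} : Set R) :=
    Ideal.subset_span (Set.mem_insert_of_mem _ rfl)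
  intro n
  induction n with
  | zero =>
    intro c h i hi
    interval_cases i
    simpa using h
  | succ n ih =>
    intro c h
    obtain ⟨d, hd⟩ := repr_pow a b (n + 2) _ h
    set A' : R := ∑ i ∈ Finset.range (n + 1), c (i + 1) * (a ^ i * b ^ (n - i)) with hA'def
    set B' : R := ∑ j ∈ Finset.range (n + 2), d (j + 1) * (a ^ j * b ^ (n + 1 - j)) with hB'def
    have hL : ∑ i ∈ Finset.range (n + 2), c i * (a ^ i * b ^ (n + 1 - i))
        = a * A' + c 0 * b ^ (n + 1) := by
      rw [Finset.sum_range_succ', hA'def, Finset.mul_sum]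
      congr 1
      · exact Finset.sum_congr rfl fun i hi => by
          have : n + 1 - (i + 1) = n - i := by omega
          rw [this]; ring
      · simp
    have hRr : ∑ j ∈ Finset.range (n + 3), d j * (a ^ j * b ^ (n + 2 - j))
        = a * B' + d 0 * b ^ (n + 2) := by
      rw [Finset.sum_range_succ', hB'def, Finset.mul_sum]
      congr 1
      · exact Finset.sum_congr rfl fun j hj => by
          have : n + 2 - (j + 1) = n + 1 - j := by omega
          rw [this]; ring
      · simp
    have heq : a * A' + c 0 * b ^ (n + 1) = a * B' + d 0 * b ^ (n + 2) := by
      rw [← hL, ← hRr]; exact hd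
    have hc0span : b ^ (n + 1) * (c 0 - d 0 * b) ∈ Ideal.span {a ^ 1} := by
      rw [pow_one]
      exact Ideal.mem_span_singleton'.mpr ⟨B' - A', by linear_combination -heq⟩
    have hc0a : c 0 - d 0 * b ∈ Ideal.span {a} := by
      have := colon_pow_aux ha hab 1 (n + 1) _ hc0span
      rwa [pow_one] at this
    obtain ⟨e, he⟩ := Ideal.mem_span_singleton'.mp hc0a
    have hc0Q : c 0 ∈ Ideal.span ({a, b} : Set R) :=
      Ideal.mem_span_pair.mpr ⟨e, d 0, by linear_combination he⟩
    have hAB : A' + e * b ^ (n + 1) = B' := by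
      have h0 : (A' + e * b ^ (n + 1) - B') * a = 0 := by
        linear_combination b ^ (n + 1) * he + heq
      exact sub_eq_zero.mp (mem_nonZeroDivisors_iff_right.mp ha _ h0)
    have hB' : B' ∈ (Ideal.span {a, b} : Ideal R) ^ (n + 1) := by
      rw [hB'def]
      exact Submodule.sum_mem _ fun j hj => Ideal.mul_mem_left _ _
        (mono_mem_pow a b (Nat.lt_succ_iff.mp (Finset.mem_range.mp hj)))
    have hA' : A' ∈ (Ideal.span {a, b} : Ideal R) ^ (n + 1) := by
      have : A' = B' - e * b ^ (n + 1) := by linear_combination hAB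
      rw [this]
      exact Submodule.sub_mem _ hB'
        (Ideal.mul_mem_left _ _ (Ideal.pow_mem_pow hbQ (n + 1)))
    have hrest := ih (fun i => c (i + 1)) hA'
    intro i hi
    cases i with
    | zero => exact hc0Q
    | succ i' => exact hrest i' (by omega)

/-- A Noetherian local ring is a two-dimensional Gorenstein local ring if it has Krull
dimension two, some system of parameters `u, v` is a regular sequence (Cohen–Macaulayness),
and the socle of the corresponding Artinian reduction is one-dimensional. -/
def IsGorensteinLocalOfDimTwo (R : Type*) [CommRing R] [IsLocalRing R] : Prop :=
  ringKrullDim R = 2 ∧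
    ∃ u v s : R, u ∈ maximalIdeal R ∧ v ∈ maximalIdeal R ∧
      u ∈ nonZeroDivisors R ∧
      (∀ r : R, v * r ∈ Ideal.span {u} → r ∈ Ideal.span {u}) ∧
      (Ideal.span {u, v} : Ideal R).radical = maximalIdeal R ∧
      s ∉ (Ideal.span {u, v} : Ideal R) ∧
      Submodule.colon (Ideal.span {u, v} : Ideal R) (maximalIdeal R)
        = Ideal.span {u, v} ⊔ Ideal.span {s}

theorem stmt_9 (R : Type*) [CommRing R] [IsNoetherianRing R] [IsLocalRing R]
    (hGor : IsGorensteinLocalOfDimTwo R)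
    (I : Ideal R) (hI : I.radical = maximalIdeal R)
    (a b : R) (hQI : Ideal.span {a, b} ≤ I)
    (hQ : (Ideal.span {a, b} : Ideal R).radical = maximalIdeal R)
    (hred : I ^ 2 = Ideal.span {a, b} * I) :
    ∀ n : ℕ, (Ideal.span {a, b} : Ideal R) ^ n ⊓
        Submodule.colon ((Ideal.span {a, b} : Ideal R) ^ (n + 1)) I
      = (Ideal.span {a, b} : Ideal R) ^ n *
          Submodule.colon (Ideal.span {a, b} : Ideal R) I := by
  obtain ⟨-, u, v, s, hum, hvm, hu, huv, -⟩ := hGor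
  obtain ⟨ha, hab⟩ := reg_transfer hum hvm hu huv hQ
  set Q : Ideal R := Ideal.span {a, b} with hQdef
  set K : Ideal R := Submodule.colon Q I with hKdef
  intro n
  apply le_antisymm
  · intro x hx
    obtain ⟨hx1, hx2⟩ := Submodule.mem_inf.mp hx
    obtain ⟨c, hc⟩ := repr_pow a b n x hx1
    rw [hc]
    refine Submodule.sum_mem _ fun i hi => ?_
    have hin : i ≤ n := Nat.lt_succ_iff.mp (Finset.mem_range.mp hi)
    have hciK : c i ∈ K := by
      rw [hKdef, Submodule.mem_colon]
      intro p hp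
      have hxp : x * p ∈ Q ^ (n + 1) := by
        have := Submodule.mem_colon.mp hx2 p hp
        rwa [smul_eq_mul] at this
      have hsum : ∑ j ∈ Finset.range (n + 1), (c j * p) * (a ^ j * b ^ (n - j))
          = x * p := by
        rw [hc, Finset.sum_mul]
        exact Finset.sum_congr rfl fun j _ => by ring
      have := quasi_reg ha hab n (fun j => c j * p) (by rw [hsum]; exact hxp) i hin
      simpa [smul_eq_mul] using this
    have h3 : (a ^ i * b ^ (n - i)) * c i ∈ Q ^ n * K :=
      Ideal.mul_mem_mul (mono_mem_pow a b hin) hciK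
    rw [mul_comm (c i)]
    exact h3
  · refine le_inf Ideal.mul_le_left ?_
    intro x hx
    rw [Submodule.mem_colon]
    intro p hp
    rw [smul_eq_mul]
    have hKI : K * I ≤ Q := Ideal.mul_le.mpr fun k hk p' hp' => by
      simpa [smul_eq_mul] using Submodule.mem_colon.mp hk p' hp'
    have hmem : x * p ∈ (Q ^ n * K) * I := Ideal.mul_mem_mul hx hp
    rw [mul_assoc] at hmem
    have h2 : Q ^ n * (K * I) ≤ Q ^ (n + 1) := by
      rw [pow_succ]
      exact Ideal.mul_mono_right hKI
    exact h2 hmem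
end

section
/- Let (R, m) be a two-dimensional regular local ring with m = (x, y). Let 1 < m ≤ n be integers and set I = (x^m) + m^n, Q = (x^m, y^n), J = m^{m-1}, f = x, g = x^m, h = y^{m-1}. Then m·J = f·J + m·h and I·J = I·h + g·J. -/
open IsLocalRing

/-- Key lemma, base case: `(X ⊔ Y)^(b+1) ≤ X * (X ⊔ Y)^b ⊔ (X ⊔ Y) * Y^b`. -/
lemma key1 {R : Type*} [CommRing R] (X Y : Ideal R) :
    ∀ b : ℕ, (X ⊔ Y) ^ (b + 1) ≤ X * (X ⊔ Y) ^ b ⊔ (X ⊔ Y) * Y ^ b := by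
  intro b
  induction b with
  | zero =>
    rw [pow_zero, pow_zero, pow_one, mul_one, mul_one]
    exact le_sup_right
  | succ b ih =>
    have h1 : (X ⊔ Y) ^ (b + 1 + 1) = (X ⊔ Y) * (X ⊔ Y) ^ (b + 1) := by ring
    rw [h1]
    calc (X ⊔ Y) * (X ⊔ Y) ^ (b + 1)
        ≤ (X ⊔ Y) * (X * (X ⊔ Y) ^ b ⊔ (X ⊔ Y) * Y ^ b) := Ideal.mul_mono_right ih
      _ = X * (X ⊔ Y) ^ (b + 1) ⊔ (X ⊔ Y) * ((X ⊔ Y) * Y ^ b) := by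
          rw [Ideal.mul_sup]; ring_nf
      _ ≤ X * (X ⊔ Y) ^ (b + 1) ⊔ (X ⊔ Y) * Y ^ (b + 1) := by
          refine sup_le le_sup_left ?_
          have : (X ⊔ Y) * Y ^ b = X * Y ^ b ⊔ Y * Y ^ b := Ideal.sup_mul X Y (Y ^ b)
          rw [this, Ideal.mul_sup]
          refine sup_le ?_ ?_
          · refine le_sup_of_le_left ?_
            calc (X ⊔ Y) * (X * Y ^ b) = X * ((X ⊔ Y) * Y ^ b) := by ring
              _ ≤ X * ((X ⊔ Y) * (X ⊔ Y) ^ b) :=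
                  Ideal.mul_mono_right (Ideal.mul_mono_right
                    (Ideal.pow_right_mono le_sup_right b))
              _ = X * (X ⊔ Y) ^ (b + 1) := by ring
          · exact le_sup_of_le_right (le_of_eq (by ring))

/-- Key lemma: `(X ⊔ Y)^(a+b) ≤ X^a * (X ⊔ Y)^b ⊔ (X ⊔ Y)^a * Y^b`. -/
lemma key2 {R : Type*} [CommRing R] (X Y : Ideal R) :
    ∀ a b : ℕ, (X ⊔ Y) ^ (a + b) ≤ X ^ a * (X ⊔ Y) ^ b ⊔ (X ⊔ Y) ^ a * Y ^ b := by
  intro a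
  induction a with
  | zero => intro b; simp
  | succ a ih =>
    intro b
    have h1 : (X ⊔ Y) ^ (a + 1 + b) = (X ⊔ Y) * (X ⊔ Y) ^ (a + b) := by ring
    rw [h1]
    calc (X ⊔ Y) * (X ⊔ Y) ^ (a + b)
        ≤ (X ⊔ Y) * (X ^ a * (X ⊔ Y) ^ b ⊔ (X ⊔ Y) ^ a * Y ^ b) :=
          Ideal.mul_mono_right (ih b)
      _ = X ^ a * ((X ⊔ Y) ^ (b + 1)) ⊔ (X ⊔ Y) ^ (a + 1) * Y ^ b := by
          rw [Ideal.mul_sup]; ring_nf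
      _ ≤ X ^ a * (X * (X ⊔ Y) ^ b ⊔ (X ⊔ Y) * Y ^ b) ⊔ (X ⊔ Y) ^ (a + 1) * Y ^ b :=
          sup_le_sup (Ideal.mul_mono_right (key1 X Y b)) le_rfl
      _ ≤ X ^ (a + 1) * (X ⊔ Y) ^ b ⊔ (X ⊔ Y) ^ (a + 1) * Y ^ b := by
          refine sup_le ?_ le_sup_right
          rw [Ideal.mul_sup]
          refine sup_le (le_sup_of_le_left (le_of_eq (by ring))) (le_sup_of_le_right ?_)
          calc X ^ a * ((X ⊔ Y) * Y ^ b) = (X ⊔ Y) * X ^ a * Y ^ b := by ring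
            _ ≤ (X ⊔ Y) * (X ⊔ Y) ^ a * Y ^ b := by
                exact Ideal.mul_mono_left (Ideal.mul_mono_right
                  (Ideal.pow_right_mono le_sup_left a))
            _ = (X ⊔ Y) ^ (a + 1) * Y ^ b := by ring

theorem stmt_11 (R : Type*) [CommRing R] [IsDomain R] [IsNoetherianRing R] [IsLocalRing R]
    (hdim : ringKrullDim R = 2) (x y : R)
    (hm : maximalIdeal R = Ideal.span {x, y})
    (m n : ℕ) (hm1 : 1 < m) (hmn : m ≤ n)
    (I J : Ideal R) (hI : I = Ideal.span {x ^ m} ⊔ maximalIdeal R ^ n)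
    (hJ : J = maximalIdeal R ^ (m - 1)) :
    maximalIdeal R * J = Ideal.span {x} * J ⊔ maximalIdeal R * Ideal.span {y ^ (m - 1)} ∧
    I * J = I * Ideal.span {y ^ (m - 1)} ⊔ Ideal.span {x ^ m} * J := by
  set X := Ideal.span {x} with hX
  set Y := Ideal.span {y} with hY
  have hMXY : maximalIdeal R = X ⊔ Y := by
    rw [hm, Ideal.span_insert]
  set k := m - 1 with hk
  have hyk : Ideal.span {y ^ k} = Y ^ k := (Ideal.span_singleton_pow y k).symm
  have hxm : Ideal.span {x ^ m} = X ^ m := (Ideal.span_singleton_pow x m).symm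
  have hYle : Y ^ k ≤ (X ⊔ Y) ^ k := Ideal.pow_right_mono le_sup_right k
  have hXle : ∀ a : ℕ, X ^ a ≤ (X ⊔ Y) ^ a := fun a => Ideal.pow_right_mono le_sup_left a
  constructor
  · -- first statement
    rw [hJ, hMXY, hyk, hk]
    apply le_antisymm
    · have h1 : (X ⊔ Y) * (X ⊔ Y) ^ (m - 1) = (X ⊔ Y) ^ (m - 1 + 1) :=
        (mul_comm _ _).trans (pow_succ _ _).symm
      rw [h1]
      exact key1 X Y (m - 1)
    · refine sup_le (Ideal.mul_mono_left le_sup_left) (Ideal.mul_mono_right hYle)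
  · -- second statement
    rw [hJ, hI, hMXY, hyk, hxm, hk]
    set M := X ⊔ Y with hM
    apply le_antisymm
    · rw [Ideal.sup_mul]
      refine sup_le (le_sup_of_le_right le_rfl) ?_
      have h1 : M ^ n * M ^ (m - 1) = M ^ (n + (m - 1)) := (pow_add M n (m - 1)).symm
      rw [h1]
      calc M ^ (n + (m - 1)) ≤ X ^ n * M ^ (m - 1) ⊔ M ^ n * Y ^ (m - 1) := key2 X Y n (m - 1)
        _ ≤ X ^ m * M ^ (m - 1) ⊔ (X ^ m ⊔ M ^ n) * Y ^ (m - 1) := by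
            refine sup_le_sup ?_ (Ideal.mul_mono_left le_sup_right)
            have hn : X ^ n = X ^ m * X ^ (n - m) := by
              rw [← pow_add, Nat.add_sub_cancel' hmn]
            rw [hn, mul_assoc]
            exact Ideal.mul_mono_right Ideal.mul_le_right
        _ ≤ (X ^ m ⊔ M ^ n) * Y ^ (m - 1) ⊔ X ^ m * M ^ (m - 1) := by
            rw [sup_comm]
    · refine sup_le ?_ ?_
      · rw [Ideal.sup_mul, Ideal.sup_mul]
        exact sup_le_sup (Ideal.mul_mono_right hYle) (Ideal.mul_mono_right hYle)
      · rw [Ideal.sup_mul]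
        exact le_sup_left
end

section
/- Let R = k[[x, y, z]] be a formal power series ring over a field k, I = (x^2 y, y^2 z, z^2 x, x y z), and Q = (x^2 y, y^2 z, z^2 x). Then I^3 = Q I^2, while I^2 ≠ Q I. -/
open MvPowerSeries Finsupp
set_option maxHeartbeats 1000000

noncomputable def EE (a b c : ℕ) : Fin 3 →₀ ℕ :=
  Finsupp.single 0 a + Finsupp.single 1 b + Finsupp.single 2 c

lemma EE_apply0 (a b c : ℕ) : EE a b c 0 = a := by
  simp [EE, Finsupp.single_apply]

lemma EE_apply1 (a b c : ℕ) : EE a b c 1 = b := by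
  simp [EE, Finsupp.single_apply]

lemma EE_apply2 (a b c : ℕ) : EE a b c 2 = c := by
  simp [EE, Finsupp.single_apply]

lemma EE_not_le {a b c d e f : ℕ} (h : d < a ∨ e < b ∨ f < c) :
    ¬ EE a b c ≤ EE d e f := by
  intro hle
  rw [Finsupp.le_def] at hle
  rcases h with h | h | h
  · have := hle 0; rw [EE_apply0, EE_apply0] at this; omega
  · have := hle 1; rw [EE_apply1, EE_apply1] at this; omega
  · have := hle 2; rw [EE_apply2, EE_apply2] at this; omega

lemma mono_eq {k : Type*} [Field k] (a b c : ℕ) :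
    (MvPowerSeries.X 0 : MvPowerSeries (Fin 3) k) ^ a * MvPowerSeries.X 1 ^ b * MvPowerSeries.X 2 ^ c
      = MvPowerSeries.monomial (R := k) (EE a b c) 1 := by
  rw [MvPowerSeries.X_pow_eq, MvPowerSeries.X_pow_eq, MvPowerSeries.X_pow_eq,
    MvPowerSeries.monomial_mul_monomial, MvPowerSeries.monomial_mul_monomial]
  simp [EE]

lemma coeff_span_zero {k : Type*} [Field k] (S : Set (MvPowerSeries (Fin 3) k))
    (p : Fin 3 →₀ ℕ)
    (hS : ∀ m ∈ S, ∃ e : Fin 3 →₀ ℕ, m = MvPowerSeries.monomial (R := k) e 1 ∧ ¬ e ≤ p)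
    {f : MvPowerSeries (Fin 3) k} (hf : f ∈ Ideal.span S) :
    MvPowerSeries.coeff (R := k) p f = 0 := by
  have key : ∀ q ≤ p, MvPowerSeries.coeff (R := k) q f = 0 := by
    refine Submodule.span_induction (p := fun f _ => ∀ q ≤ p, MvPowerSeries.coeff (R := k) q f = 0)
      ?_ ?_ ?_ ?_ hf
    · rintro m hm q hq
      obtain ⟨e, rfl, he⟩ := hS m hm
      rw [MvPowerSeries.coeff_monomial, if_neg]
      rintro rfl
      exact he hq
    · intro q _; simp
    · intro f g _ _ hf hg q hq
      simp [map_add, hf q hq, hg q hq]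
    · intro r f _ hfIH q hq
      rw [smul_eq_mul, MvPowerSeries.coeff_mul]
      refine Finset.sum_eq_zero fun uv huv => ?_
      rw [Finset.HasAntidiagonal.mem_antidiagonal] at huv
      have h2 : uv.2 ≤ p := le_trans (huv ▸ le_add_self) hq
      rw [hfIH uv.2 h2, mul_zero]
  exact key p le_rfl

theorem stmt_15 (k : Type*) [Field k]
    (x y z : MvPowerSeries (Fin 3) k)
    (hx : x = MvPowerSeries.X 0) (hy : y = MvPowerSeries.X 1) (hz : z = MvPowerSeries.X 2)
    (I Q : Ideal (MvPowerSeries (Fin 3) k))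
    (hI : I = Ideal.span {x ^ 2 * y, y ^ 2 * z, z ^ 2 * x, x * y * z})
    (hQ : Q = Ideal.span {x ^ 2 * y, y ^ 2 * z, z ^ 2 * x}) :
    I ^ 3 = Q * I ^ 2 ∧ I ^ 2 ≠ Q * I := by
  set W : Ideal (MvPowerSeries (Fin 3) k) := Ideal.span {x * y * z} with hW
  have ha : x ^ 2 * y ∈ Q := by rw [hQ]; exact Ideal.subset_span (by simp)
  have hb : y ^ 2 * z ∈ Q := by rw [hQ]; exact Ideal.subset_span (by simp)
  have hc : z ^ 2 * x ∈ Q := by rw [hQ]; exact Ideal.subset_span (by simp)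
  have haI : x ^ 2 * y ∈ I := by rw [hI]; exact Ideal.subset_span (by simp)
  have hbI : y ^ 2 * z ∈ I := by rw [hI]; exact Ideal.subset_span (by simp)
  have hcI : z ^ 2 * x ∈ I := by rw [hI]; exact Ideal.subset_span (by simp)
  have hwI : x * y * z ∈ I := by rw [hI]; exact Ideal.subset_span (by simp)
  have hQI : Q ≤ I := by
    rw [hI, hQ]
    apply Ideal.span_mono
    intro m hm
    simp only [Set.mem_insert_iff, Set.mem_singleton_iff] at hm ⊢
    tauto
  have hWI : W ≤ I := by
    rw [hW, Ideal.span_singleton_le_iff_mem]; exact hwI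
  have hIQW : I = Q ⊔ W := by
    rw [hI, hQ, hW, ← Ideal.span_union]
    congr 1
    ext t
    simp only [Set.mem_insert_iff, Set.mem_singleton_iff, Set.mem_union]
    tauto
  have hW3 : W ^ 3 ≤ Q * I ^ 2 := by
    rw [hW, Ideal.span_singleton_pow, Ideal.span_singleton_le_iff_mem]
    have h3 : (x * y * z) ^ 3 = (x ^ 2 * y) * ((y ^ 2 * z) * (z ^ 2 * x)) := by ring
    rw [h3, sq]
    exact Ideal.mul_mem_mul ha (Ideal.mul_mem_mul hbI hcI)
  constructor
  · apply le_antisymm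
    · have e3 : I ^ 3 = I * (I * I) := by ring
      rw [e3]
      nth_rewrite 1 [hIQW]
      rw [Ideal.sup_mul]
      apply sup_le
      · rw [sq]
      · nth_rewrite 1 [hIQW]
        rw [Ideal.sup_mul, Ideal.mul_sup]
        apply sup_le
        · calc W * (Q * I) = Q * (W * I) := by ring
            _ ≤ Q * (I * I) := Ideal.mul_mono le_rfl (Ideal.mul_mono hWI le_rfl)
            _ = Q * I ^ 2 := by rw [sq]
        · nth_rewrite 1 [hIQW]
          rw [Ideal.mul_sup, Ideal.mul_sup]
          apply sup_le
          · calc W * (W * Q) = Q * (W * W) := by ring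
              _ ≤ Q * (I * I) := Ideal.mul_mono le_rfl (Ideal.mul_mono hWI hWI)
              _ = Q * I ^ 2 := by rw [sq]
          · calc W * (W * W) = W ^ 3 := by ring
              _ ≤ Q * I ^ 2 := hW3
    · calc Q * I ^ 2 ≤ I * I ^ 2 := Ideal.mul_mono hQI le_rfl
        _ = I ^ 3 := by ring
  · intro heq
    have hw2 : (x * y * z) ^ 2 ∈ Q * I := by
      rw [← heq, sq, sq]
      exact Ideal.mul_mem_mul hwI hwI
    rw [hQ, hI, Ideal.span_mul_span'] at hw2
    have hz0 : MvPowerSeries.coeff (R := k) (EE 2 2 2) ((x * y * z) ^ 2) = 0 := by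
      refine coeff_span_zero _ _ ?_ hw2
      rintro m hm
      rw [Set.mem_mul] at hm
      obtain ⟨s, hs, t, ht, rfl⟩ := hm
      subst hx hy hz
      simp only [Set.mem_insert_iff, Set.mem_singleton_iff] at hs ht
      rcases hs with rfl | rfl | rfl <;> rcases ht with rfl | rfl | rfl | rfl
      · exact ⟨EE 4 2 0, by rw [← mono_eq 4 2 0]; ring, EE_not_le (by omega)⟩
      · exact ⟨EE 2 3 1, by rw [← mono_eq 2 3 1]; ring, EE_not_le (by omega)⟩
      · exact ⟨EE 3 1 2, by rw [← mono_eq 3 1 2]; ring, EE_not_le (by omega)⟩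
      · exact ⟨EE 3 2 1, by rw [← mono_eq 3 2 1]; ring, EE_not_le (by omega)⟩
      · exact ⟨EE 2 3 1, by rw [← mono_eq 2 3 1]; ring, EE_not_le (by omega)⟩
      · exact ⟨EE 0 4 2, by rw [← mono_eq 0 4 2]; ring, EE_not_le (by omega)⟩
      · exact ⟨EE 1 2 3, by rw [← mono_eq 1 2 3]; ring, EE_not_le (by omega)⟩
      · exact ⟨EE 1 3 2, by rw [← mono_eq 1 3 2]; ring, EE_not_le (by omega)⟩
      · exact ⟨EE 3 1 2, by rw [← mono_eq 3 1 2]; ring, EE_not_le (by omega)⟩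
      · exact ⟨EE 1 2 3, by rw [← mono_eq 1 2 3]; ring, EE_not_le (by omega)⟩
      · exact ⟨EE 2 0 4, by rw [← mono_eq 2 0 4]; ring, EE_not_le (by omega)⟩
      · exact ⟨EE 2 1 3, by rw [← mono_eq 2 1 3]; ring, EE_not_le (by omega)⟩
    have hone : MvPowerSeries.coeff (R := k) (EE 2 2 2) ((x * y * z) ^ 2) = 1 := by
      subst hx hy hz
      rw [show (MvPowerSeries.X 0 * MvPowerSeries.X 1 * MvPowerSeries.X 2 : MvPowerSeries (Fin 3) k) ^ 2
          = MvPowerSeries.X 0 ^ 2 * MvPowerSeries.X 1 ^ 2 * MvPowerSeries.X 2 ^ 2 from by ring,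
        mono_eq 2 2 2, MvPowerSeries.coeff_monomial_same]
    rw [hz0] at hone
    exact one_ne_zero hone.symm
end
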